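/- arXiv:2009.12761 — 6 statements merged into one kernel-verified Lean document; each statement's English description precedes it below -/
import Mathlib

section
/- Let K = ℚ(ζ₉), 𝔩 = (1 − ζ₉)·𝒪_K, ρ the complex conjugation automorphism of K (determined by ρ(ζ₉) = ζ₉⁻¹), and v_𝔩 the 𝔩-adic valuation on K. If r ∈ K^× satisfies v_𝔩(r − 1) ≥ 2, and r·ρ(r) is a rational integer with r·ρ(r) ≡ 1 (mod 3), then v_𝔩(r − 1) ≥ 3. -/
open NumberField IsDedekindDomain

/-- For `K = ℚ(ζ₉)`, `𝔩 = (1 - ζ₉) 𝓞 K`, `ρ` complex conjugation (`ρ ζ₉ = ζ₉⁻¹`) and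
`v` the `𝔩`-adic valuation: if `r ∈ K×` satisfies `v(r - 1) ≥ 2` (i.e. the `ℤₘ₀`-valued
valuation of `r - 1` is at most `ofAdd (-2)`), and `r * ρ r` is a rational integer
congruent to `1 mod 3`, then `v(r - 1) ≥ 3`. -/
theorem stmt_3 (K : Type*) [Field K] [NumberField K] [IsCyclotomicExtension {9} ℚ K]
    (ζ : K) (hζ : IsPrimitiveRoot ζ 9)
    (ρ : K ≃ₐ[ℚ] K) (hρ : ρ ζ = ζ⁻¹)
    (x : 𝓞 K) (hx : (x : K) = 1 - ζ)
    (v : HeightOneSpectrum (𝓞 K)) (hv : v.asIdeal = Ideal.span {x})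
    (r : K) (hr : r ≠ 0)
    (h2 : v.valuation K (r - 1) ≤ Multiplicative.ofAdd (-2 : ℤ))
    (n : ℤ) (hn : r * ρ r = (n : K)) (hn3 : n ≡ 1 [ZMOD 3]) :
    v.valuation K (r - 1) ≤ Multiplicative.ofAdd (-3 : ℤ) := by
  have hinj : Function.Injective (algebraMap (𝓞 K) K) := RingOfIntegers.coe_injective
  -- the root of unity as an algebraic integer
  obtain ⟨z, hzdef⟩ : ∃ z : 𝓞 K, z = 1 - x := ⟨_, rfl⟩
  have hzK : (algebraMap (𝓞 K) K) z = ζ := by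
    rw [hzdef, map_sub, map_one, ← RingOfIntegers.coe_eq_algebraMap, hx]; ring
  have hζ9 : ζ ^ 9 = 1 := hζ.pow_eq_one
  have hz9 : z ^ 9 = 1 := hinj (by rw [map_pow, hzK, map_one, hζ9])
  have hζ1 : ζ ≠ 1 := hζ.ne_one (by norm_num)
  have hζ63 : ζ ^ 6 + ζ ^ 3 + 1 = 0 := by
    have h3ne : ζ ^ 3 - 1 ≠ 0 :=
      sub_ne_zero.mpr (hζ.pow_ne_one_of_pos_of_lt (by norm_num) (by norm_num))
    have : (ζ ^ 3 - 1) * (ζ ^ 6 + ζ ^ 3 + 1) = 0 := by linear_combination hζ9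
    rcases mul_eq_zero.mp this with h | h
    · exact absurd h h3ne
    · exact h
  have hz63 : z ^ 6 + z ^ 3 + 1 = 0 := by
    apply hinj
    rw [map_zero, map_add, map_add, map_pow, map_pow, map_one, hzK]
    exact hζ63
  have hxz : x = 1 - z := by rw [hzdef]; ring
  -- x is nonzero and prime
  have hx0 : x ≠ 0 := by
    intro h
    rw [h] at hx
    simp only [map_zero] at hx
    exact hζ1 (sub_eq_zero.mp hx.symm).symm
  have hxprime : Prime x := by
    have hp := v.isPrime
    rw [hv] at hp
    exact (Ideal.span_singleton_prime hx0).mp hp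
  -- conjugation on the ring of integers
  set σ : 𝓞 K ≃ₐ[ℤ] 𝓞 K := galRestrict ℤ ℚ K (𝓞 K) ρ with hσdef
  have hσmap : ∀ a : 𝓞 K, algebraMap (𝓞 K) K (σ a) = ρ (algebraMap (𝓞 K) K a) := fun a =>
    algebraMap_galRestrict_apply ℤ ρ a
  have hζinv : ζ⁻¹ = ζ ^ 8 := inv_eq_of_mul_eq_one_left (by rw [← pow_succ]; exact hζ9)
  have hσz : σ z = z ^ 8 := by
    apply hinj
    rw [hσmap, map_pow, hzK, hρ, hζinv]
  have hσx : σ x = -z ^ 8 * x := by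
    have h1 : σ x = 1 - z ^ 8 := by
      rw [hxz, map_sub, map_one, hσz]
    rw [h1, hxz]
    linear_combination -hz9
  -- x divides 3, in fact x^3 does
  have h1z3 : (1 : 𝓞 K) - z ^ 3 = x * (1 + z + z ^ 2) := by rw [hxz]; ring
  have h3a : (3 : 𝓞 K) = -z ^ 6 * (x * (1 + z + z ^ 2)) ^ 2 := by
    rw [← h1z3]
    linear_combination (z ^ 3 - 2) * hz9 + hz63
  have hx3 : x ∣ (3 : 𝓞 K) := ⟨-z ^ 6 * x * (1 + z + z ^ 2) ^ 2, by linear_combination h3a⟩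
  have hx1zz : x ∣ 1 + z + z ^ 2 := by
    have hrw : (1 + z + z ^ 2 : 𝓞 K) = 3 - x - x * (1 + z) := by rw [hxz]; ring
    rw [hrw]
    exact dvd_sub (dvd_sub hx3 dvd_rfl) (Dvd.intro _ rfl)
  obtain ⟨w, hw⟩ := hx1zz
  have hx33 : x ^ 3 ∣ (3 : 𝓞 K) := ⟨x * (-z ^ 6 * w ^ 2), by rw [h3a, hw]; ring⟩
  -- residue field: every integer is congruent to a rational integer mod x
  have h92 : ((3 : ℕ+) ^ 2 : ℕ+) = 9 := rfl
  have hcyc : IsCyclotomicExtension {(((3 : ℕ+) ^ 2 : ℕ+) : ℕ)} ℚ K := by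
    rw [h92]; exact (inferInstance : IsCyclotomicExtension {9} ℚ K)
  have hζ' : IsPrimitiveRoot ζ (((3 : ℕ+) ^ 2 : ℕ+) : ℕ) := by
    rw [h92]; exact hζ
  have htoz : hζ'.toInteger = z := by
    apply hinj
    rw [hzK]; rfl
  have htop : Algebra.adjoin ℤ ({z} : Set (𝓞 K)) = ⊤ := by
    rw [← htoz, ← hζ'.integralPowerBasis_gen]
    exact hζ'.integralPowerBasis.adjoin_gen_eq_top
  have hres : ∀ a : 𝓞 K, ∃ t : ℤ, x ∣ a - (t : 𝓞 K) := by
    intro a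
    have ha : a ∈ Algebra.adjoin ℤ ({z} : Set (𝓞 K)) := by rw [htop]; trivial
    induction ha using Algebra.adjoin_induction with
    | mem b hb =>
      refine ⟨1, ?_⟩
      have hb' : b = z := Set.mem_singleton_iff.mp hb
      subst hb'
      have : b - ((1 : ℤ) : 𝓞 K) = -x := by push_cast; rw [hzdef]; ring
      rw [this]
      exact dvd_neg.mpr dvd_rfl
    | algebraMap t =>
      refine ⟨t, ?_⟩
      rw [algebraMap_int_eq]
      simp
    | add a b ha hb iha ihb =>
      obtain ⟨t1, ht1⟩ := iha
      obtain ⟨t2, ht2⟩ := ihb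
      refine ⟨t1 + t2, ?_⟩
      have : a + b - ((t1 + t2 : ℤ) : 𝓞 K) = (a - t1) + (b - t2) := by push_cast; ring
      rw [this]
      exact dvd_add ht1 ht2
    | mul a b ha hb iha ihb =>
      obtain ⟨t1, ht1⟩ := iha
      obtain ⟨t2, ht2⟩ := ihb
      refine ⟨t1 * t2, ?_⟩
      have : a * b - ((t1 * t2 : ℤ) : 𝓞 K) = a * (b - t2) + (t2 : 𝓞 K) * (a - t1) := by
        push_cast; ring
      rw [this]
      exact dvd_add (Dvd.dvd.mul_left ht2 a) (Dvd.dvd.mul_left ht1 _)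
  -- σ preserves divisibility by powers of x
  have hσdvdpow : ∀ (j : ℕ) (a : 𝓞 K), x ^ j ∣ a → x ^ j ∣ σ a := by
    rintro j a ⟨t, rfl⟩
    exact ⟨(-z ^ 8) ^ j * σ t, by rw [map_mul, map_pow, hσx]; ring⟩
  have hσdvd : ∀ a : 𝓞 K, x ∣ a → x ∣ σ a := by
    rintro a ⟨t, rfl⟩
    exact ⟨-z ^ 8 * σ t, by rw [map_mul, hσx]; ring⟩
  have hσres : ∀ a : 𝓞 K, x ∣ σ a - a := by
    intro a
    obtain ⟨t, ht⟩ := hres a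
    have h1 : x ∣ σ (a - (t : 𝓞 K)) := hσdvd _ ht
    have h2 : σ a - a = σ (a - (t : 𝓞 K)) - (a - (t : 𝓞 K)) := by
      rw [map_sub, map_intCast]
      ring
    rw [h2]
    exact dvd_sub h1 ht
  -- write r as a quotient of integers
  obtain ⟨A, B, hBmem, hAB⟩ := IsFractionRing.div_surjective (A := 𝓞 K) r
  have hB0 : B ≠ 0 := nonZeroDivisors.ne_zero hBmem
  have hBK : algebraMap (𝓞 K) K B ≠ 0 := fun h => hB0 (hinj (by rw [h, map_zero]))
  have hA : algebraMap (𝓞 K) K A = r * algebraMap (𝓞 K) K B := by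
    rw [← hAB]; field_simp
  obtain ⟨c, hcdef⟩ : ∃ c : 𝓞 K, c = A - B := ⟨_, rfl⟩
  have hrc : r - 1 = algebraMap (𝓞 K) K c / algebraMap (𝓞 K) K B := by
    rw [hcdef, map_sub, ← hAB]
    field_simp
  -- the main equation
  have heq : A * σ A = (n : 𝓞 K) * (B * σ B) := by
    apply hinj
    rw [map_mul, map_mul, map_mul, hσmap, hσmap, hA, map_mul ρ, map_intCast]
    linear_combination (algebraMap (𝓞 K) K B) * (ρ (algebraMap (𝓞 K) K B)) * hn
  obtain ⟨m, hm⟩ : (3 : ℤ) ∣ n - 1 := Int.ModEq.dvd hn3.symm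
  have hmO : (n : 𝓞 K) - 1 = 3 * (m : 𝓞 K) := by exact_mod_cast hm
  -- valuation bookkeeping
  have hval : v.valuation K (r - 1) = v.intValuation c / v.intValuation B := by
    rw [hrc, map_div₀, v.valuation_of_algebraMap, v.valuation_of_algebraMap]
  have hvB0 : v.intValuation B ≠ 0 := by
    rw [v.intValuation_apply]
    exact v.intValuation_ne_zero B hB0
  obtain ⟨γ, hγ⟩ := WithZero.ne_zero_iff_exists.mp hvB0
  have hγ1 : γ ≤ 1 := by
    rw [← WithZero.coe_le_coe, hγ, v.intValuation_apply]
    exact v.intValuation_le_one B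
  obtain ⟨k, hkγ⟩ : ∃ k : ℕ, (k : ℤ) = -Multiplicative.toAdd γ :=
    ⟨(-Multiplicative.toAdd γ).toNat,
      Int.toNat_of_nonneg (by simpa using Multiplicative.toAdd_le.mpr hγ1)⟩
  have hkeq : v.intValuation B = (Multiplicative.ofAdd (-(k : ℤ)) : Multiplicative ℤ) := by
    rw [← hγ, hkγ, neg_neg]
    rfl
  have hiff : ∀ (a : 𝓞 K) (j : ℕ),
      v.intValuation a ≤ Multiplicative.ofAdd (-(j : ℤ)) ↔ x ^ j ∣ a := by
    intro a j
    rw [show ((Multiplicative.ofAdd (-(j : ℤ)) : Multiplicative ℤ) : WithZero (Multiplicative ℤ))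
        = WithZero.exp (-(j : ℤ)) from rfl, v.intValuation_le_pow_iff_dvd, hv, Ideal.span_singleton_pow,
      Ideal.dvd_iff_le, Ideal.span_singleton_le_span_singleton]
  have hBk : x ^ k ∣ B := (hiff B k).mp (le_of_eq hkeq)
  have hBk1 : ¬ x ^ (k + 1) ∣ B := by
    intro hd
    have h := (hiff B (k + 1)).mpr hd
    rw [hkeq, WithZero.coe_le_coe, Multiplicative.ofAdd_le] at h
    push_cast at h
    omega
  have hc2 : x ^ (k + 2) ∣ c := by
    rw [hval, hkeq] at h2
    rw [div_le_iff₀ (by exact WithZero.zero_lt_coe _)] at h2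
    refine (hiff c (k + 2)).mp (le_trans h2 (le_of_eq ?_))
    rw [← WithZero.coe_mul, ← ofAdd_add]
    congr 1
    push_cast
    ring
  -- the core argument
  obtain ⟨B', hB'⟩ := id hBk
  have hB'x : ¬ x ∣ B' := by
    rintro ⟨t, ht⟩
    exact hBk1 ⟨t, by rw [hB', ht]; ring⟩
  obtain ⟨c', hc'⟩ := id hc2
  have hσc : σ c = σ A - σ B := by rw [hcdef, map_sub]
  have E1 : B * σ c + c * σ B + c * σ c = ((n : 𝓞 K) - 1) * (B * σ B) := by
    rw [hσc, hcdef]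
    linear_combination heq
  have h2k3 : x ^ (k + k + 3) ∣ B * σ c + c * σ B := by
    have hrw : B * σ c + c * σ B = ((n : 𝓞 K) - 1) * (B * σ B) - c * σ c := by
      linear_combination E1
    rw [hrw]
    apply dvd_sub
    · rw [hmO]
      obtain ⟨u3, hu3⟩ := hx33
      obtain ⟨sB, hsB⟩ := hσdvdpow k B hBk
      refine ⟨u3 * (m : 𝓞 K) * B' * sB, ?_⟩
      rw [hu3, hsB, hB']
      ring
    · have h1 : x ^ (k + 2) ∣ σ c := hσdvdpow (k + 2) c hc2
      obtain ⟨sc, hsc⟩ := h1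
      refine dvd_trans (pow_dvd_pow x (by omega : k + k + 3 ≤ (k + 2) + (k + 2))) ?_
      exact ⟨c' * sc, by rw [hsc, hc']; ring⟩
  obtain ⟨sB, hsB⟩ : ∃ sB, σ B' = sB := ⟨σ B', rfl⟩
  obtain ⟨sc, hsc⟩ : ∃ sc, σ c' = sc := ⟨σ c', rfl⟩
  have hfact : B * σ c + c * σ B
      = x ^ (k + k + 2) * ((-z ^ 8) ^ k * (z ^ 16 * (B' * sc) + c' * sB)) := by
    rw [hB', hc', map_mul, map_mul, map_pow, map_pow, hσx, hsB, hsc]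
    ring
  have hxuE : x ∣ (-z ^ 8) ^ k * (z ^ 16 * (B' * sc) + c' * sB) := by
    rw [hfact] at h2k3
    have : x ^ (k + k + 3) = x ^ (k + k + 2) * x := by rw [← pow_succ]
    rw [this] at h2k3
    exact (mul_dvd_mul_iff_left (pow_ne_zero (k + k + 2) hx0)).mp h2k3
  have hxE : x ∣ z ^ 16 * (B' * sc) + c' * sB := by
    have h9 : (-z) * (-z ^ 8) = 1 := by linear_combination hz9
    have hd : x ∣ (-z) ^ k * ((-z ^ 8) ^ k * (z ^ 16 * (B' * sc) + c' * sB)) :=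
      Dvd.dvd.mul_left hxuE _
    rwa [← mul_assoc, ← mul_pow, h9, one_pow, one_mul] at hd
  -- residue computation
  have d1 : x ∣ sc - c' := hsc ▸ hσres c'
  have d2 : x ∣ sB - B' := hsB ▸ hσres B'
  have d3 : x ∣ z ^ 16 - 1 := by
    have h1 : z - 1 ∣ z ^ 16 - 1 ^ 16 := sub_dvd_pow_sub_pow z 1 16
    have h2 : x ∣ z - 1 := ⟨-1, by rw [hzdef]; ring⟩
    rw [one_pow] at h1
    exact dvd_trans h2 h1
  have hx2bc : x ∣ 2 * (B' * c') := by
    have hcomb : x ∣ (z ^ 16 * (B' * sc) + c' * sB) - (z ^ 16 - 1) * (B' * sc)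
        - B' * (sc - c') - c' * (sB - B') :=
      dvd_sub (dvd_sub (dvd_sub hxE (d3.mul_right _)) (d1.mul_left B')) (d2.mul_left c')
    have hrw : (z ^ 16 * (B' * sc) + c' * sB) - (z ^ 16 - 1) * (B' * sc)
        - B' * (sc - c') - c' * (sB - B') = 2 * (B' * c') := by ring
    rwa [hrw] at hcomb
  have hxbc : x ∣ B' * c' := by
    have h3bc : x ∣ 3 * (B' * c') := hx3.mul_right _
    have hrw : (3 : 𝓞 K) * (B' * c') - 2 * (B' * c') = B' * c' := by ring
    rw [← hrw]
    exact dvd_sub h3bc hx2bc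
  have hxc' : x ∣ c' := by
    rcases hxprime.2.2 _ _ hxbc with h | h
    · exact absurd h hB'x
    · exact h
  obtain ⟨t, ht⟩ := hxc'
  have hkey : x ^ (k + 3) ∣ c := ⟨t, by rw [hc', ht]; ring⟩
  -- conclude
  rw [hval, hkeq, div_le_iff₀ (by exact WithZero.zero_lt_coe _)]
  have hcle := (hiff c (k + 3)).mpr hkey
  refine le_trans hcle (le_of_eq ?_)
  rw [← WithZero.coe_mul, ← ofAdd_add]
  congr 1
  push_cast
  ring
end

section
/- Let K = ℚ(ζ₉), 𝔩 = (1 − ζ₉)·𝒪_K, ρ the complex conjugation automorphism of K (determined by ρ(ζ₉) = ζ₉⁻¹), and v_𝔩 the 𝔩-adic valuation on K. If r ∈ K^× satisfies v_𝔩(r) = 0, and r·ρ(r) is a rational integer with r·ρ(r) ≡ 1 (mod 3), then there exists exactly one root of unity w of K (i.e. w = ±ζ₉^m for some 0 ≤ m ≤ 8) such that v_𝔩(w·r − 1) ≥ 4. -/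
open NumberField IsDedekindDomain

set_option linter.unusedSectionVars false
set_option linter.unusedVariables false
set_option maxHeartbeats 1000000

section Core

variable {R : Type*} [CommRing R] [IsDomain R]

lemma hdvd_aux (z : R) (c : ℕ) : (1 - z) ∣ 1 - z ^ c := by
  simpa using sub_dvd_pow_sub_pow 1 z c

lemma homega (z : R) (hz9 : z ^ 9 = 1) (hz3 : z ^ 3 ≠ 1) : 1 + z ^ 3 + z ^ 6 = 0 := by
  have h : (z ^ 3 - 1) * (1 + z ^ 3 + z ^ 6) = 0 := by linear_combination hz9
  rcases mul_eq_zero.mp h with h' | h'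
  · exact (hz3 (sub_eq_zero.mp h')).elim
  · exact h'

lemma h3eq (z : R) (hz9 : z ^ 9 = 1) (hω : 1 + z ^ 3 + z ^ 6 = 0) :
    (3 : R) = (1 - z ^ 3) * (1 - z ^ 6) := by linear_combination hω - hz9

-- l ∣ 3
lemma hl3 (z : R) (hz9 : z ^ 9 = 1) (hω : 1 + z ^ 3 + z ^ 6 = 0) : (1 - z) ∣ (3 : R) := by
  rw [h3eq z hz9 hω]
  exact dvd_mul_of_dvd_left (hdvd_aux z 3) _

-- l^2 ∣ 3
lemma hl23 (z : R) (hz9 : z ^ 9 = 1) (hω : 1 + z ^ 3 + z ^ 6 = 0) : (1 - z) ^ 2 ∣ (3 : R) := by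
  rw [h3eq z hz9 hω, sq]
  exact mul_dvd_mul (hdvd_aux z 3) (hdvd_aux z 6)

-- l^3 ∣ 1 - z^3
lemma hl3z3 (z : R) (hz9 : z ^ 9 = 1) (hω : 1 + z ^ 3 + z ^ 6 = 0) :
    (1 - z) ^ 3 ∣ 1 - z ^ 3 := by
  have key : 1 - z ^ 3 = (1 - z) ^ 3 + 3 * (1 - z) * z := by ring
  rw [key]
  refine dvd_add dvd_rfl ?_
  obtain ⟨t, ht⟩ := hl23 z hz9 hω
  exact ⟨t * z, by rw [ht]; ring⟩

lemma hl3z6 (z : R) (hz9 : z ^ 9 = 1) (hω : 1 + z ^ 3 + z ^ 6 = 0) :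
    (1 - z) ^ 3 ∣ 1 - z ^ 6 := by
  have key : 1 - z ^ 6 = (1 - z ^ 3) * (1 + z ^ 3) := by ring
  rw [key]
  exact dvd_mul_of_dvd_left (hl3z3 z hz9 hω) _

-- l^6 ∣ 3
lemma hl63 (z : R) (hz9 : z ^ 9 = 1) (hω : 1 + z ^ 3 + z ^ 6 = 0) : (1 - z) ^ 6 ∣ (3 : R) := by
  rw [h3eq z hz9 hω, show (6:ℕ) = 3 + 3 from rfl, pow_add]
  exact mul_dvd_mul (hl3z3 z hz9 hω) (hl3z6 z hz9 hω)

-- l ∣ (k : R) → 3 ∣ k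
lemma hkey (z : R) (hz9 : z ^ 9 = 1) (hω : 1 + z ^ 3 + z ^ 6 = 0) (hpr : Prime (1 - z))
    (k : ℤ) (h : (1 - z) ∣ (k : R)) : (3:ℤ) ∣ k := by
  by_contra h3
  have hsq : ∃ t : ℤ, k * k = 1 + 3 * t := by
    obtain ⟨q, hq⟩ : ∃ q, k = 3 * q + k % 3 := ⟨k / 3, by omega⟩
    have h1 : k % 3 = 1 ∨ k % 3 = 2 := by omega
    rcases h1 with h1 | h1
    · exact ⟨3*q*q + 2*q, by rw [hq, h1]; ring⟩
    · exact ⟨3*q*q + 4*q + 1, by rw [hq, h1]; ring⟩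
  obtain ⟨t, ht⟩ := hsq
  have hd1 : (1 - z) ∣ (1 : R) := by
    have hkk : (1 - z) ∣ ((k : R) * (k : R)) := Dvd.dvd.mul_left h _
    have h3t : (1 - z) ∣ ((3 : R) * (t : R)) := Dvd.dvd.mul_right (hl3 z hz9 hω) _
    have : ((k : R) * (k : R)) - (3 : R) * (t : R) = 1 := by
      have := congrArg (fun s : ℤ => (s : R)) ht
      push_cast at this
      linear_combination this
    calc (1 - z) ∣ ((k : R) * (k : R)) - (3 : R) * (t : R) := dvd_sub hkk h3t
      _ = 1 := this
  exact hpr.not_unit (isUnit_of_dvd_one hd1)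


-- z^(9k+c) = z^c
lemma hzred (z : R) (hz9 : z ^ 9 = 1) (k c : ℕ) : z ^ (9 * k + c) = z ^ c := by
  rw [pow_add, pow_mul, hz9, one_pow, one_mul]

-- l does not divide powers of z
lemma hlz (z : R) (hz9 : z ^ 9 = 1) (hpr : Prime (1 - z)) (c : ℕ) : ¬ (1 - z) ∣ z ^ c := by
  intro h
  refine hpr.not_unit (isUnit_of_dvd_one ?_)
  have : z ^ c * z ^ (8 * c) = 1 := by
    rw [← pow_add, show c + 8 * c = 9 * c by ring, pow_mul, hz9, one_pow]
  have h2 : (1 - z) ∣ z ^ c * z ^ (8 * c) := Dvd.dvd.mul_right h _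
  rwa [this] at h2

-- unit cancellation: l^k ∣ t * z^c → l^k ∣ t
lemma hzcancel (z : R) (hz9 : z ^ 9 = 1) (k c : ℕ) (t : R)
    (h : (1 - z) ^ k ∣ t * z ^ c) : (1 - z) ^ k ∣ t := by
  have : t * z ^ c * z ^ (8 * c) = t := by
    rw [mul_assoc, ← pow_add, show c + 8 * c = 9 * c by ring, pow_mul, hz9, one_pow, mul_one]
  have h2 : (1 - z) ^ k ∣ t * z ^ c * z ^ (8 * c) := Dvd.dvd.mul_right h _
  rwa [this] at h2

-- prime cancellation against a: l^k ∣ u * t, l ∤ t → l^k ∣ u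
lemma hcancel (z : R) (hpr : Prime (1 - z)) (t : R) (ht : ¬ (1 - z) ∣ t) :
    ∀ k u, (1 - z) ^ k ∣ u * t → (1 - z) ^ k ∣ u := by
  intro k
  induction k with
  | zero => intro u _; simpa using one_dvd u
  | succ k ih =>
    intro u h
    have h1 : (1 - z) ∣ u * t := dvd_trans (dvd_pow_self _ (Nat.succ_ne_zero k)) h
    have h2 : (1 - z) ∣ u := ((hpr.dvd_mul).mp h1).resolve_right ht
    obtain ⟨u', rfl⟩ := h2
    obtain ⟨w, hw⟩ := h
    have hw' : u' * t = (1 - z) ^ k * w := by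
      have hne : (1 - z) ≠ 0 := hpr.ne_zero
      apply mul_left_cancel₀ hne
      rw [← mul_assoc]
      calc (1 - z) * u' * t = (1 - z) ^ (k + 1) * w := by linear_combination hw
        _ = (1 - z) * ((1 - z) ^ k * w) := by ring
    have h3 := mul_dvd_mul_left (1 - z) (ih u' ⟨w, hw'⟩)
    rwa [← pow_succ'] at h3


lemma hassoc (z : R) (hz9 : z ^ 9 = 1) (c d k : ℕ) (hcd : c * d = 9 * k + 1) :
    (1 - z ^ c) ∣ (1 - z) := by
  have h1 : (1 - z ^ c) ∣ 1 - (z ^ c) ^ d := hdvd_aux (z ^ c) d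
  rwa [← pow_mul, hcd, hzred z hz9 k 1, pow_one] at h1

lemma hne2 (z : R) (hz9 : z ^ 9 = 1) (hpr : Prime (1 - z)) (c d k : ℕ) (hcd : c * d = 9 * k + 1)
    (h : (1 - z) ^ 2 ∣ 1 - z ^ c) : False := by
  obtain ⟨t, ht⟩ := h
  obtain ⟨s, hs⟩ := hassoc z hz9 c d k hcd
  have h1 : (1 - z) * 1 = (1 - z) * ((1 - z) * (t * s)) := by
    calc (1 - z) * 1 = (1 - z ^ c) * s := by rw [← hs]; ring
      _ = (1 - z) * ((1 - z) * (t * s)) := by rw [ht]; ring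
  have h2 := mul_left_cancel₀ hpr.ne_zero h1
  exact hpr.not_unit (isUnit_of_dvd_one ⟨t * s, h2⟩)

lemma hF9 (z : R) (hz9 : z ^ 9 = 1) (hω : 1 + z ^ 3 + z ^ 6 = 0) (hpr : Prime (1 - z))
    (h : (1 - z) ^ 4 ∣ 1 - z ^ 3) : False := by
  obtain ⟨w, hw⟩ := (pow_dvd_pow (1 - z) (by norm_num : 3 ≤ 6)).trans (hl63 z hz9 hω)
  have h1 : (1 - z) ^ 4 ∣ (1 - z) ^ 3 := by
    have h2 : (1 - z) ^ 3 = (1 - z ^ 3) - 3 * (1 - z) * z := by ring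
    rw [h2]
    refine dvd_sub h ?_
    exact ⟨w * z, by rw [hw]; ring⟩
  obtain ⟨s, hs⟩ := h1
  have h3 : (1 - z) ^ 3 * 1 = (1 - z) ^ 3 * ((1 - z) * s) := by
    calc (1 - z) ^ 3 * 1 = (1 - z) ^ 4 * s := by rw [mul_one]; exact hs
      _ = (1 - z) ^ 3 * ((1 - z) * s) := by ring
  have h4 := mul_left_cancel₀ (pow_ne_zero 3 hpr.ne_zero) h3
  exact hpr.not_unit (isUnit_of_dvd_one ⟨s, h4⟩)

lemma hF9' (z : R) (hz9 : z ^ 9 = 1) (hω : 1 + z ^ 3 + z ^ 6 = 0) (hpr : Prime (1 - z))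
    (h : (1 - z) ^ 4 ∣ 1 - z ^ 6) : False := by
  refine hF9 z hz9 hω hpr ?_
  have h1 : 1 - z ^ 6 = (1 - z ^ 3) * -1 * z ^ 6 := by linear_combination -hz9
  rw [h1] at h
  have h2 := hzcancel z hz9 4 6 _ h
  have h3 : (1 - z ^ 3) * -1 = -(1 - z ^ 3) := by ring
  rw [h3, dvd_neg] at h2
  exact h2

lemma hl2 (z : R) (hz9 : z ^ 9 = 1) (hω : 1 + z ^ 3 + z ^ 6 = 0) (hpr : Prime (1 - z))
    (h : (1 - z) ∣ (2 : R)) : False := by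
  have h1 : (1 - z) ∣ (1 : R) := by
    have := dvd_sub (hl3 z hz9 hω) h
    norm_num at this
    exact this
  exact hpr.not_unit (isUnit_of_dvd_one h1)

lemma hplus (z : R) (hz9 : z ^ 9 = 1) (hω : 1 + z ^ 3 + z ^ 6 = 0) (hpr : Prime (1 - z))
    (c : ℕ) (hc : c < 9) (h : (1 - z) ∣ 1 + z ^ c) : False := by
  have sq : ∀ c' d k : ℕ, c * 2 = c' ∨ c * 2 = 9 + c' → c' * d = 9 * k + 1 → False := by
    intro c' d k h2c hcd
    refine hne2 z hz9 hpr c' d k hcd ?_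
    have key : (1 - z) ^ 2 ∣ (1 - z ^ c) * (1 + z ^ c) := by
      rw [sq]
      exact mul_dvd_mul (hdvd_aux z c) h
    have he : (1 - z ^ c) * (1 + z ^ c) = 1 - z ^ (c * 2) := by
      rw [show c * 2 = c + c by ring, pow_add]; ring
    rcases h2c with h2c | h2c
    · rwa [he, h2c] at key
    · rw [he, h2c, show 9 + c' = 9 * 1 + c' by ring, hzred z hz9 1 c'] at key
      exact key
  interval_cases c
  · exact hl2 z hz9 hω hpr (by norm_num at h; exact_mod_cast h)
  · exact sq 2 5 1 (by norm_num) (by norm_num)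
  · exact sq 4 7 3 (by norm_num) (by norm_num)
  · refine hlz z hz9 hpr 6 ?_
    have h1 : 1 + z ^ 3 = -(z ^ 6) := by linear_combination hω
    rw [h1, dvd_neg] at h
    exact h
  · exact sq 8 8 7 (by norm_num) (by norm_num)
  · exact sq 1 1 0 (by norm_num) (by norm_num)
  · refine hlz z hz9 hpr 3 ?_
    have h1 : 1 + z ^ 6 = -(z ^ 3) := by linear_combination hω
    rw [h1, dvd_neg] at h
    exact h
  · exact sq 5 2 1 (by norm_num) (by norm_num)
  · exact sq 7 4 3 (by norm_num) (by norm_num)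

lemma Huniq1 (z : R) (hz9 : z ^ 9 = 1) (hω : 1 + z ^ 3 + z ^ 6 = 0) (hpr : Prime (1 - z))
    (c : ℕ) (hc : c < 9) (hc0 : c ≠ 0) (h : (1 - z) ^ 4 ∣ 1 - z ^ c) : False := by
  have h2 : (1 - z) ^ 2 ∣ 1 - z ^ c := (pow_dvd_pow (1 - z) (by norm_num : 2 ≤ 4)).trans h
  interval_cases c
  · exact absurd rfl hc0
  · exact hne2 z hz9 hpr 1 1 0 (by norm_num) h2
  · exact hne2 z hz9 hpr 2 5 1 (by norm_num) h2
  · exact hF9 z hz9 hω hpr h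
  · exact hne2 z hz9 hpr 4 7 3 (by norm_num) h2
  · exact hne2 z hz9 hpr 5 2 1 (by norm_num) h2
  · exact hF9' z hz9 hω hpr h
  · exact hne2 z hz9 hpr 7 4 3 (by norm_num) h2
  · exact hne2 z hz9 hpr 8 8 7 (by norm_num) h2

lemma Huniq2 (z : R) (hz9 : z ^ 9 = 1) (hω : 1 + z ^ 3 + z ^ 6 = 0) (hpr : Prime (1 - z))
    (c : ℕ) (hc : c < 9) (h : (1 - z) ^ 4 ∣ 1 + z ^ c) : False :=
  hplus z hz9 hω hpr c hc ((dvd_pow_self (1 - z) (by norm_num : (4:ℕ) ≠ 0)).trans h)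


lemma core_uniq (z : R) (hz9 : z ^ 9 = 1) (hω : 1 + z ^ 3 + z ^ 6 = 0) (hpr : Prime (1 - z))
    (a b : R) (ha : ¬ (1 - z) ∣ a)
    (ε ε' : R) (hε : ε = 1 ∨ ε = -1) (hε' : ε' = 1 ∨ ε' = -1) (m m' : Fin 9)
    (h : (1 - z) ^ 4 ∣ ε * z ^ (m : ℕ) * a - b)
    (h' : (1 - z) ^ 4 ∣ ε' * z ^ (m' : ℕ) * a - b) :
    ε * z ^ (m : ℕ) = ε' * z ^ (m' : ℕ) := by
  have hd : (1 - z) ^ 4 ∣ (ε * z ^ (m:ℕ) - ε' * z ^ (m':ℕ)) * a := by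
    have hsub := dvd_sub h h'
    have he : (ε * z ^ (m:ℕ) * a - b) - (ε' * z ^ (m':ℕ) * a - b)
        = (ε * z ^ (m:ℕ) - ε' * z ^ (m':ℕ)) * a := by ring
    rwa [he] at hsub
  have hd4 := hcancel z hpr a ha 4 _ hd
  set c := (9 - (m:ℕ) + (m':ℕ)) % 9 with hcdef
  have hc9 : c < 9 := Nat.mod_lt _ (by norm_num)
  have hq : 9 * ((9 - (m:ℕ) + (m':ℕ)) / 9) + c = 9 - (m:ℕ) + (m':ℕ) := Nat.div_add_mod _ 9
  have hm9 : (m:ℕ) < 9 := m.isLt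
  have hm'9 : (m':ℕ) < 9 := m'.isLt
  have hεε : ε * ε = 1 := by rcases hε with rfl | rfl <;> norm_num
  have hkey2 : (1 - z) ^ 4 ∣ 1 - (ε * ε') * z ^ c := by
    have h5 := Dvd.dvd.mul_left hd4 (ε * z ^ (9 - (m:ℕ)))
    have he : ε * z ^ (9 - (m:ℕ)) * (ε * z ^ (m:ℕ) - ε' * z ^ (m':ℕ))
        = (ε * ε) * (z ^ (9 - (m:ℕ)) * z ^ (m:ℕ))
          - (ε * ε') * (z ^ (9 - (m:ℕ)) * z ^ ((m':ℕ))) := by ring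
    rw [he] at h5
    have h6 : z ^ (9 - (m:ℕ)) * z ^ (m:ℕ) = 1 := by
      rw [← pow_add, show 9 - (m:ℕ) + (m:ℕ) = 9 by omega, hz9]
    have h7 : z ^ (9 - (m:ℕ)) * z ^ ((m':ℕ)) = z ^ c := by
      rw [← pow_add, ← hq, hzred z hz9]
    have h8 : (ε * ε) * (z ^ (9 - (m:ℕ)) * z ^ (m:ℕ))
          - (ε * ε') * (z ^ (9 - (m:ℕ)) * z ^ ((m':ℕ))) = 1 - (ε * ε') * z ^ c := by
      rw [h6, h7, hεε]; ring
    rwa [h8] at h5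
  rcases hε with rfl | rfl <;> rcases hε' with rfl | rfl
  · have h9 : 1 - ((1:R) * 1) * z ^ c = 1 - z ^ c := by ring
    rw [h9] at hkey2
    have hc0 : c = 0 := by
      by_contra hc0
      exact Huniq1 z hz9 hω hpr c hc9 hc0 hkey2
    have : (m:ℕ) = (m':ℕ) := by omega
    rw [this]
  · have h9 : 1 - ((1:R) * -1) * z ^ c = 1 + z ^ c := by ring
    rw [h9] at hkey2
    exact (Huniq2 z hz9 hω hpr c hc9 hkey2).elim
  · have h9 : 1 - ((-1:R) * 1) * z ^ c = 1 + z ^ c := by ring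
    rw [h9] at hkey2
    exact (Huniq2 z hz9 hω hpr c hc9 hkey2).elim
  · have h9 : 1 - ((-1:R) * -1) * z ^ c = 1 - z ^ c := by ring
    rw [h9] at hkey2
    have hc0 : c = 0 := by
      by_contra hc0
      exact Huniq1 z hz9 hω hpr c hc9 hc0 hkey2
    have : (m:ℕ) = (m':ℕ) := by omega
    rw [this]


lemma core_exists (z : R) (σ : R →+* R) (a b : R) (n : ℤ)
    (hz9 : z ^ 9 = 1) (hω : 1 + z ^ 3 + z ^ 6 = 0) (hpr : Prime (1 - z))
    (hσz : σ z = z ^ 8)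
    (hdig : ∀ t : R, ∃ j : ℤ, (1 - z) ∣ t - (j : R))
    (ha : ¬ (1 - z) ∣ a) (hb : ¬ (1 - z) ∣ b)
    (hn1 : (3:ℤ) ∣ n - 1) (hnorm : a * σ a = (n : R) * (b * σ b)) :
    ∃ (ε : R) (m : Fin 9), (ε = 1 ∨ ε = -1) ∧ (1 - z) ^ 4 ∣ ε * z ^ (m : ℕ) * a - b := by
  have hint : ∀ j : ℤ, (3:ℤ) ∣ j → (1 - z) ∣ (j : R) := by
    rintro j ⟨k, hk⟩
    have he : (j : R) = 3 * (k : R) := by rw [hk]; push_cast; ring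
    rw [he]; exact (hl3 z hz9 hω).mul_right _
  have hdig3 : ∀ t : R, ¬ (1 - z) ∣ t → ∃ j : ℤ, ¬ (3:ℤ) ∣ j ∧ (1 - z) ∣ t - (j:R) := by
    intro t ht
    obtain ⟨j, hj⟩ := hdig t
    refine ⟨j, fun h3 => ht ?_, hj⟩
    have h4 := dvd_add hj (hint j h3)
    simpa using h4
  -- Step A : sign
  obtain ⟨ja, hja3, hja⟩ := hdig3 a ha
  obtain ⟨jb, hjb3, hjb⟩ := hdig3 b hb
  obtain ⟨e, he, hed⟩ : ∃ e : ℤ, (e = 1 ∨ e = -1) ∧ (3:ℤ) ∣ e * ja - jb := by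
    have h1 : ja % 3 = 1 ∨ ja % 3 = 2 := by omega
    have h2 : jb % 3 = 1 ∨ jb % 3 = 2 := by omega
    rcases h1 with h1 | h1 <;> rcases h2 with h2 | h2
    · exact ⟨1, Or.inl rfl, by omega⟩
    · exact ⟨-1, Or.inr rfl, by omega⟩
    · exact ⟨-1, Or.inr rfl, by omega⟩
    · exact ⟨1, Or.inl rfl, by omega⟩
  set ε : R := ((e : ℤ) : R) with hεdef
  have hεR : ε = 1 ∨ ε = -1 := by
    rcases he with rfl | rfl
    · left; rw [hεdef]; push_cast; ring
    · right; rw [hεdef]; push_cast; ring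
  have hε2 : ε * ε = 1 := by rcases hεR with h | h <;> rw [h] <;> ring
  have h1 : (1 - z) ∣ ε * a - b := by
    have he2 : ε * a - b = (e:R) * (a - (ja:R)) - (b - (jb:R)) + ((e * ja - jb : ℤ) : R) := by
      rw [hεdef]; push_cast; ring
    rw [he2]
    exact dvd_add (dvd_sub (hja.mul_left _) hjb) (hint _ hed)
  have ha1 : ¬ (1 - z) ∣ ε * a := by
    intro h
    have h2 := h.mul_left ε
    rw [show ε * (ε * a) = (ε * ε) * a by ring, hε2, one_mul] at h2
    exact ha h2
  -- auxiliary divisibilities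
  set s : R := 1 + z + z^2 + z^3 + z^4 + z^5 + z^6 + z^7 with hsdef
  have hs1 : (1 - z) ∣ s + 1 := by
    have he2 : s + 1 = (1 - z) * (-(7 + 6*z + 5*z^2 + 4*z^3 + 3*z^4 + 2*z^5 + z^6)) + 3 * 3 := by
      rw [hsdef]; ring
    rw [he2]; exact dvd_add (dvd_mul_right _ _) ((hl3 z hz9 hω).mul_right 3)
  have hD8 : (1 - z)^2 ∣ z^8 + z - 2 := by
    have he2 : z^8 + z - 2 = (1 - z) * (-(s + 1)) := by rw [hsdef]; ring
    rw [he2, pow_two]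
    exact mul_dvd_mul_left _ (dvd_neg.mpr hs1)
  have hD7 : (1 - z)^2 ∣ z^7 + 2*z - 3 := by
    have hQ1 : (1 - z) ∣ (z^6 + z^5 + z^4 + z^3 + z^2 + z + 3) := by
      have he2 : z^6 + z^5 + z^4 + z^3 + z^2 + z + 3
          = (1 - z) * (-(6 + 5*z + 4*z^2 + 3*z^3 + 2*z^4 + z^5)) + 3 * 3 := by ring
      rw [he2]; exact dvd_add (dvd_mul_right _ _) ((hl3 z hz9 hω).mul_right 3)
    have he2 : z^7 + 2*z - 3 = (1 - z) * (-(z^6 + z^5 + z^4 + z^3 + z^2 + z + 3)) := by ring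
    rw [he2, pow_two]
    exact mul_dvd_mul_left _ (dvd_neg.mpr hQ1)
  -- Step B : mod l^2
  obtain ⟨e1, he1⟩ : (1 - z) ∣ b - ε * a := dvd_sub_comm.mp h1
  obtain ⟨al, hal3, hal⟩ := hdig3 (ε * a) ha1
  obtain ⟨c1, hc1⟩ := hdig e1
  obtain ⟨c, hclt, hcc⟩ : ∃ c : ℕ, c < 3 ∧ (3:ℤ) ∣ (c:ℤ) * al - c1 := by
    have h1 : al % 3 = 1 ∨ al % 3 = 2 := by omega
    have h2 : c1 % 3 = 0 ∨ c1 % 3 = 1 ∨ c1 % 3 = 2 := by omega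
    rcases h1 with h1 | h1 <;> rcases h2 with h2 | h2 | h2
    · exact ⟨0, by norm_num, by push_cast; omega⟩
    · exact ⟨1, by norm_num, by push_cast; omega⟩
    · exact ⟨2, by norm_num, by push_cast; omega⟩
    · exact ⟨0, by norm_num, by push_cast; omega⟩
    · exact ⟨2, by norm_num, by push_cast; omega⟩
    · exact ⟨1, by norm_num, by push_cast; omega⟩
  obtain ⟨m1, hm19, hzm⟩ : ∃ m1 : ℕ, m1 < 9 ∧
      (1 - z)^2 ∣ z ^ m1 - 1 - (c:R) * (1 - z) := by
    interval_cases c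
    · exact ⟨0, by norm_num, by norm_num⟩
    · refine ⟨8, by norm_num, ?_⟩
      have he2 : z ^ 8 - 1 - ((1:ℕ):R) * (1 - z) = z^8 + z - 2 := by push_cast; ring
      rw [he2]; exact hD8
    · refine ⟨7, by norm_num, ?_⟩
      have he2 : z ^ 7 - 1 - ((2:ℕ):R) * (1 - z) = z^7 + 2*z - 3 := by push_cast; ring
      rw [he2]; exact hD7
  have h2 : (1 - z)^2 ∣ ε * z ^ m1 * a - b := by
    have he2 : ε * z ^ m1 * a - b
        = (z ^ m1 - 1 - (c:R) * (1 - z)) * (ε * a)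
          + (1 - z) * ((c:R) * (ε * a - (al:R)) + (((c:ℤ) * al - c1 : ℤ) : R) + ((c1:R) - e1)) := by
      push_cast
      linear_combination -he1
    rw [he2]
    refine dvd_add (hzm.mul_right _) ?_
    rw [pow_two]
    refine mul_dvd_mul_left _ (dvd_add (dvd_add (hal.mul_left _) (hint _ hcc)) ?_)
    rw [show (c1:R) - e1 = -(e1 - (c1:R)) by ring]
    exact dvd_neg.mpr hc1
  -- Step C : mod l^3 using the norm condition
  set A : R := ε * z ^ m1 * a with hAdef
  have hA : ¬ (1 - z) ∣ A := by
    intro h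
    have h3 : (1 - z) ^ 1 ∣ (ε * a) * z ^ m1 := by
      rw [pow_one, show ε * a * z ^ m1 = A by rw [hAdef]; ring]
      exact h
    have h4 := hzcancel z hz9 1 m1 _ h3
    rw [pow_one] at h4
    exact ha1 h4
  have hσl : σ (1 - z) = (1 - z) * s := by
    rw [map_sub, map_one, hσz, hsdef]; ring
  have hσdvd : ∀ t : R, (1 - z) ∣ t → (1 - z) ∣ σ t := by
    rintro t ⟨u, rfl⟩
    rw [map_mul, hσl]
    exact ⟨s * σ u, by ring⟩
  have hσε : σ ε = ε := by
    rcases hεR with h | h <;> rw [h] <;> simp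
  have hAnorm : A * σ A = a * σ a := by
    have hσzm : σ (z ^ m1) = z ^ (8 * m1) := by rw [map_pow, hσz, ← pow_mul]
    have hzz : z ^ m1 * z ^ (8 * m1) = 1 := by
      rw [← pow_add, show m1 + 8 * m1 = 9 * m1 by ring, pow_mul, hz9, one_pow]
    calc A * σ A = (ε * ε) * (z ^ m1 * z ^ (8 * m1)) * (a * σ a) := by
          rw [hAdef, map_mul, map_mul, hσε, hσzm]; ring
      _ = a * σ a := by rw [hε2, hzz]; ring
  have hl4n : (1 - z) ^ 4 ∣ ((n:R) - 1) := by
    obtain ⟨k, hk⟩ := hn1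
    have he2 : (n:R) - 1 = 3 * (k:R) := by
      have := congrArg (fun t : ℤ => (t : R)) hk
      push_cast at this
      linear_combination this
    rw [he2]
    exact ((pow_dvd_pow (1-z) (by norm_num : 4 ≤ 6)).trans (hl63 z hz9 hω)).mul_right _
  have hnormA : (1 - z) ^ 4 ∣ b * σ b - A * σ A := by
    rw [hAnorm, hnorm]
    have he2 : b * σ b - (n:R) * (b * σ b) = -(((n:R) - 1) * (b * σ b)) := by ring
    rw [he2]
    exact dvd_neg.mpr (hl4n.mul_right _)
  obtain ⟨f, hf⟩ : (1 - z)^2 ∣ b - A := by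
    rw [hAdef]
    exact dvd_sub_comm.mp h2
  obtain ⟨α, hα3, hα⟩ := hdig3 A hA
  obtain ⟨cf, hcf⟩ := hdig f
  have hX : (1 - z) ^ 2 ∣ A * (s*s) * σ f + f * σ A := by
    have hexp : b * σ b - A * σ A
        = (1-z)^2 * (A * (s*s) * σ f + f * σ A) + (1-z)^4 * (f * (s*s) * σ f) := by
      have hb' : b = A + (1-z)^2 * f := by linear_combination hf
      have hσf2 : σ ((1-z)^2 * f) = ((1 - z) * s)^2 * σ f := by rw [map_mul, map_pow, hσl]
      rw [hb', map_add, hσf2]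
      ring
    have h5 : (1 - z) ^ 4 ∣ (1-z)^2 * (A * (s*s) * σ f + f * σ A) := by
      have h6 := dvd_sub hnormA (dvd_mul_right ((1-z)^4) (f * (s*s) * σ f))
      rw [hexp] at h6
      simpa using h6
    obtain ⟨t, ht⟩ := h5
    refine ⟨t, ?_⟩
    apply mul_left_cancel₀ (pow_ne_zero 2 hpr.ne_zero)
    rw [ht]; ring
  have hXl : (1 - z) ∣ A * (s*s) * σ f + f * σ A :=
    (dvd_pow_self (1-z) (two_ne_zero)).trans hX
  have hXc : (1 - z) ∣ ((2 * α * cf : ℤ) : R) := by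
    have hd1 : (1 - z) ∣ σ f - (cf:R) := by
      have h6 := hσdvd _ hcf
      rwa [map_sub, map_intCast] at h6
    have hd2 : (1 - z) ∣ σ A - (α:R) := by
      have h6 := hσdvd _ hα
      rwa [map_sub, map_intCast] at h6
    have hd3 : (1 - z) ∣ s*s - 1 := by
      have he2 : s*s - 1 = (s + 1) * (s - 1) := by ring
      rw [he2]
      exact hs1.mul_right _
    have he2 : ((2*α*cf:ℤ):R) = (A*(s*s)*σ f + f*σ A)
        - ((A - (α:R))*(s*s)*(σ f) + (α:R)*((s*s) - 1)*(σ f) + (α:R)*((σ f) - (cf:R))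
          + (f - (cf:R))*(σ A) + (cf:R)*((σ A) - (α:R))) := by
      push_cast; ring
    rw [he2]
    refine dvd_sub hXl ?_
    refine dvd_add (dvd_add (dvd_add (dvd_add ?_ ?_) ?_) ?_) ?_
    · exact (hα.mul_right _).mul_right _
    · exact (hd3.mul_left _).mul_right _
    · exact hd1.mul_left _
    · exact hcf.mul_right _
    · exact hd2.mul_left _
  have hc3 : (3:ℤ) ∣ cf := by
    have h6 := hkey z hz9 hω hpr _ hXc
    rcases Int.Prime.dvd_mul' (by norm_num) h6 with h7 | h7
    · rcases Int.Prime.dvd_mul' (by norm_num) h7 with h8 | h8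
      · norm_num at h8
      · exact absurd h8 hα3
    · exact h7
  have h3b : (1 - z)^3 ∣ b - A := by
    have he2 : b - A = (1-z)^2 * (f - (cf:R)) + (1-z)^2 * ((cf:R)) := by
      rw [hf]; ring
    rw [he2, show (3:ℕ) = 2 + 1 from rfl, pow_add, pow_one]
    exact dvd_add (mul_dvd_mul_left _ hcf) (mul_dvd_mul_left _ (hint _ hc3))
  -- Step D : mod l^4
  obtain ⟨g, hg⟩ := h3b
  obtain ⟨d, hd⟩ := hdig g
  obtain ⟨k, hk3, hkd⟩ : ∃ k : ℕ, k < 3 ∧ (3:ℤ) ∣ d + (k:ℤ) * α := by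
    have h1 : α % 3 = 1 ∨ α % 3 = 2 := by omega
    have h2 : d % 3 = 0 ∨ d % 3 = 1 ∨ d % 3 = 2 := by omega
    rcases h1 with h1 | h1 <;> rcases h2 with h2 | h2 | h2
    · exact ⟨0, by norm_num, by push_cast; omega⟩
    · exact ⟨2, by norm_num, by push_cast; omega⟩
    · exact ⟨1, by norm_num, by push_cast; omega⟩
    · exact ⟨0, by norm_num, by push_cast; omega⟩
    · exact ⟨1, by norm_num, by push_cast; omega⟩
    · exact ⟨2, by norm_num, by push_cast; omega⟩
  have hzk : (1-z)^4 ∣ z^(3*k) - 1 + (k:R) * (1-z)^3 := by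
    interval_cases k
    · norm_num
    · have he2 : z^(3*1) - 1 + ((1:ℕ):R) * (1-z)^3 = 3 * (1 - z) * (-z) := by push_cast; ring
      rw [he2]
      obtain ⟨w, hw⟩ := (pow_dvd_pow (1-z) (by norm_num : 3 ≤ 6)).trans (hl63 z hz9 hω)
      exact ⟨w * (-z), by linear_combination (1-z) * (-z) * hw⟩
    · have he2 : z^(3*2) - 1 + ((2:ℕ):R) * (1-z)^3
          = (1-z)^4 * (10 + 4*z + z^2) + 3 * (1-z) * (-3 + 7*z - 6*z^2) := by push_cast; ring
      rw [he2]
      refine dvd_add (dvd_mul_right _ _) ?_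
      obtain ⟨w, hw⟩ := (pow_dvd_pow (1-z) (by norm_num : 3 ≤ 6)).trans (hl63 z hz9 hω)
      exact ⟨w * (-3 + 7*z - 6*z^2), by linear_combination (1-z) * (-3 + 7*z - 6*z^2) * hw⟩
  have h4 : (1-z)^4 ∣ z^(3*k) * A - b := by
    have he2 : z^(3*k) * A - b
        = (z^(3*k) - 1 + (k:R)*(1-z)^3)*A - (1-z)^3*((k:R)*A + g) := by
      linear_combination -hg
    rw [he2]
    refine dvd_sub (hzk.mul_right A) ?_
    have h7 : (1 - z) ∣ (k:R)*A + g := by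
      have he3 : (k:R)*A + g = (k:R)*(A - (α:R)) + ((d + (k:ℤ)*α : ℤ):R) + (g - (d:R)) := by
        push_cast; ring
      rw [he3]
      exact dvd_add (dvd_add (hα.mul_left _) (hint _ hkd)) hd
    rw [show (4:ℕ) = 3 + 1 from rfl, pow_add, pow_one]
    exact mul_dvd_mul_left _ h7
  refine ⟨ε, ⟨(m1 + 3*k) % 9, Nat.mod_lt _ (by norm_num)⟩, hεR, ?_⟩
  have hzm2 : z ^ ((m1 + 3*k) % 9) = z ^ (m1 + 3*k) := by
    conv_rhs => rw [← Nat.div_add_mod (m1 + 3*k) 9]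
    rw [hzred z hz9]
  have he3 : ε * z ^ ((m1 + 3*k) % 9) * a - b = z^(3*k) * A - b := by
    rw [hzm2, hAdef, pow_add]
    ring
  rw [Fin.val_mk, he3]
  exact h4

end Core


/-- For `K = ℚ(ζ₉)`, `𝔩 = (1 - ζ₉) 𝓞 K`, `ρ` complex conjugation (`ρ ζ₉ = ζ₉⁻¹`) and
`v` the `𝔩`-adic valuation: if `r ∈ K×` satisfies `v(r) = 0` (i.e. the `ℤₘ₀`-valued
valuation of `r` is `1`), and `r * ρ r` is a rational integer congruent to `1 mod 3`,
then there is exactly one root of unity `w` of `K` (i.e. `w = ε * ζ₉ ^ m` with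
`ε ∈ {1, -1}` and `0 ≤ m ≤ 8`) such that `v(w * r - 1) ≥ 4`. -/
theorem stmt_4 (K : Type*) [Field K] [NumberField K] [IsCyclotomicExtension {9} ℚ K]
    (ζ : K) (hζ : IsPrimitiveRoot ζ 9)
    (ρ : K ≃ₐ[ℚ] K) (hρ : ρ ζ = ζ⁻¹)
    (x : 𝓞 K) (hx : (x : K) = 1 - ζ)
    (v : HeightOneSpectrum (𝓞 K)) (hv : v.asIdeal = Ideal.span {x})
    (r : K) (hr : r ≠ 0)
    (h0 : v.valuation K r = 1)
    (n : ℤ) (hn : r * ρ r = (n : K)) (hn3 : n ≡ 1 [ZMOD 3]) :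
    ∃! w : K, (∃ ε : K, (ε = 1 ∨ ε = -1) ∧ ∃ m : Fin 9, w = ε * ζ ^ (m : ℕ)) ∧
      v.valuation K (w * r - 1) ≤ Multiplicative.ofAdd (-4 : ℤ) := by
  classical
  -- set up the prime-power cyclotomic instance
  have h92 : (9 : ℕ) = (3:ℕ) ^ 2 := by decide
  have hset : ({9} : Set ℕ) = {(3:ℕ) ^ 2} := by rw [h92]
  haveI inst2 : IsCyclotomicExtension {(3:ℕ) ^ 2} ℚ K := by
    rw [← hset]; infer_instance
  haveI : Fact (Nat.Prime 3) := ⟨by norm_num⟩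
  have hζ' : IsPrimitiveRoot ζ ((3:ℕ) ^ 2 : ℕ) := by
    rw [← h92]; exact hζ
  set z : 𝓞 K := hζ'.toInteger with hzdef
  have hzK : (z : K) = ζ := rfl
  have hζ0 : ζ ≠ 0 := hζ.ne_zero (by norm_num)
  have hzp : IsPrimitiveRoot z 9 := by
    have := hζ'.toInteger_isPrimitiveRoot
    convert this using 1
  have hz9 : z ^ 9 = 1 := hzp.pow_eq_one
  have hz3 : z ^ 3 ≠ 1 := hzp.pow_ne_one_of_pos_of_lt (by norm_num) (by norm_num)
  have hω : 1 + z ^ 3 + z ^ 6 = 0 := homega z hz9 hz3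
  have hxz : x = 1 - z := by
    have : (x : K) = ((1 - z : 𝓞 K) : K) := by
      rw [hx]; push_cast [hzK]; ring
    exact_mod_cast this
  have hpr : Prime (1 - z) := by
    have h1 : Prime (z - 1) := hζ'.zeta_sub_one_prime (k := 1)
    have h2 := h1.neg
    rwa [neg_sub] at h2
  -- digit lemma
  have htop : Algebra.adjoin ℤ ({z} : Set (𝓞 K)) = ⊤ := by
    have h1 := hζ'.integralPowerBasis.adjoin_gen_eq_top
    rwa [hζ'.integralPowerBasis_gen] at h1
  have hdig : ∀ t : 𝓞 K, ∃ j : ℤ, (1 - z) ∣ t - (j : 𝓞 K) := by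
    intro t
    have ht : t ∈ Algebra.adjoin ℤ ({z} : Set (𝓞 K)) := by rw [htop]; trivial
    refine Algebra.adjoin_induction ?_ ?_ ?_ ?_ ht
    · rintro y hy
      rw [Set.mem_singleton_iff] at hy
      subst hy
      exact ⟨1, ⟨-1, by push_cast; ring⟩⟩
    · intro j
      refine ⟨j, ?_⟩
      have : algebraMap ℤ (𝓞 K) j = (j : 𝓞 K) := by
        simp [algebraMap_int_eq, eq_intCast]
      rw [this, sub_self]
      exact dvd_zero _
    · rintro p q hp hq ⟨j1, hj1⟩ ⟨j2, hj2⟩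
      refine ⟨j1 + j2, ?_⟩
      have he : p + q - ((j1 + j2 : ℤ) : 𝓞 K) = (p - (j1:𝓞 K)) + (q - (j2:𝓞 K)) := by
        push_cast; ring
      rw [he]; exact dvd_add hj1 hj2
    · rintro p q hp hq ⟨j1, hj1⟩ ⟨j2, hj2⟩
      refine ⟨j1 * j2, ?_⟩
      have he : p * q - ((j1 * j2 : ℤ) : 𝓞 K) = p * (q - (j2:𝓞 K)) + (j2:𝓞 K) * (p - (j1:𝓞 K)) := by
        push_cast; ring
      rw [he]
      exact dvd_add (hj2.mul_left _) (hj1.mul_left _)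
  -- conjugation on the ring of integers
  set σ : 𝓞 K →+* 𝓞 K := ((galRestrict ℤ ℚ K (𝓞 K) ρ : 𝓞 K ≃ₐ[ℤ] 𝓞 K) : 𝓞 K →+* 𝓞 K) with hσdef
  have hσcoe : ∀ t : 𝓞 K, ((σ t : 𝓞 K) : K) = ρ ((t : 𝓞 K) : K) := by
    intro t
    rw [hσdef]
    show (algebraMap (𝓞 K) K) ((galRestrict ℤ ℚ K (𝓞 K)) ρ t) = ρ (algebraMap _ K t)
    rw [galRestrict_apply, algebraMap_galRestrictHom_apply]
    rfl
  have hζinv : ζ⁻¹ = ζ ^ 8 := by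
    refine inv_eq_of_mul_eq_one_right ?_
    have h1 : ζ * ζ ^ 8 = ζ ^ 9 := by ring
    rw [h1, hζ.pow_eq_one]
  have hσz : σ z = z ^ 8 := by
    have h1 : ((σ z : 𝓞 K) : K) = ((z ^ 8 : 𝓞 K) : K) := by
      rw [hσcoe, hzK, hρ, hζinv]; push_cast [hzK]; ring
    exact_mod_cast h1
  -- fraction representation of r
  obtain ⟨a₁, b₁, hb₁, hrep⟩ := IsFractionRing.div_surjective (A := 𝓞 K) r
  have hb₁0 : (b₁ : K) ≠ 0 := by
    intro h
    exact nonZeroDivisors.ne_zero hb₁ (by exact_mod_cast h)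
  have hrb : r * (b₁ : K) = (a₁ : K) := by
    rw [← hrep]; field_simp
  have ha₁0 : a₁ ≠ 0 := by
    intro h
    apply hr
    rw [← hrep, h]
    simp
  have hb₁0' : b₁ ≠ 0 := fun h => hb₁0 (by rw [h]; simp)
  -- valuations
  have hveq : v.intValuation a₁ = v.intValuation b₁ := by
    have h1 := v.valuation_of_algebraMap (K := K) a₁
    have h2 := v.valuation_of_algebraMap (K := K) b₁
    have h3 : v.valuation K ((a₁ : K)) = v.valuation K r * v.valuation K ((b₁ : K)) := by
      rw [← hrb, Valuation.map_mul]
    rw [h0, one_mul] at h3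
    rw [← h1, ← h2, h3]
  -- divisibility characterization of valuations
  have hx0 : x ≠ 0 := by rw [hxz]; exact hpr.ne_zero
  have hdvd_iff : ∀ (t : 𝓞 K) (k : ℕ),
      v.intValuation t ≤ (Multiplicative.ofAdd (-(k:ℤ)) : Multiplicative ℤ) ↔ x ^ k ∣ t := by
    intro t k
    show v.intValuation t ≤ WithZero.exp (-(k:ℤ)) ↔ _
    rw [v.intValuation_le_pow_iff_dvd t k, hv,
      Ideal.span_singleton_pow, Ideal.dvd_span_singleton, Ideal.mem_span_singleton]
  have hunit : ∀ t : 𝓞 K, ¬ x ∣ t → v.intValuation t = 1 := by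
    intro t ht
    rw [HeightOneSpectrum.intValuation_apply]
    rcases lt_or_eq_of_le (v.intValuation_le_one t) with h | h
    · exfalso
      apply ht
      have h2 := (v.intValuation_lt_one_iff_dvd t).mp h
      rwa [hv, Ideal.dvd_span_singleton, Ideal.mem_span_singleton] at h2
    · exact h
  -- extract the common power of x from a₁ and b₁
  have hb₁v : v.intValuation b₁ ≠ 0 := by
    rw [HeightOneSpectrum.intValuation_apply, v.intValuationDef_if_neg hb₁0']
    exact WithZero.coe_ne_zero
  obtain ⟨γ, hγ⟩ := WithZero.ne_zero_iff_exists.mp hb₁v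
  have hγ1 : (γ : WithZero (Multiplicative ℤ)) ≤ 1 := by
    rw [hγ, HeightOneSpectrum.intValuation_apply]; exact v.intValuation_le_one b₁
  have htγ : Multiplicative.toAdd γ ≤ 0 := by
    rw [← WithZero.coe_one, WithZero.coe_le_coe] at hγ1
    exact hγ1
  set k : ℕ := (- Multiplicative.toAdd γ).toNat with hkdef
  have hγeq : γ = Multiplicative.ofAdd (-(k:ℤ)) := by
    have h1 : ((k:ℤ)) = - Multiplicative.toAdd γ := by rw [hkdef]; omega
    have h2 : Multiplicative.toAdd γ = Multiplicative.toAdd (Multiplicative.ofAdd (-(k:ℤ))) := by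
      show Multiplicative.toAdd γ = -(k:ℤ)
      omega
    exact Multiplicative.toAdd.injective h2
  have hdvdb : x ^ k ∣ b₁ := (hdvd_iff b₁ k).mp (by rw [← hγ, hγeq])
  have hdvda : x ^ k ∣ a₁ := (hdvd_iff a₁ k).mp (by rw [hveq, ← hγ, hγeq])
  have hndvdb : ¬ x ^ (k+1) ∣ b₁ := by
    intro h
    have h2 := (hdvd_iff b₁ (k+1)).mpr h
    rw [← hγ, hγeq, WithZero.coe_le_coe, Multiplicative.ofAdd_le] at h2
    omega
  have hndvda : ¬ x ^ (k+1) ∣ a₁ := by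
    intro h
    have h2 := (hdvd_iff a₁ (k+1)).mpr h
    rw [hveq, ← hγ, hγeq, WithZero.coe_le_coe, Multiplicative.ofAdd_le] at h2
    omega
  obtain ⟨a, haeq⟩ := hdvda
  obtain ⟨b, hbeq⟩ := hdvdb
  have hand : ¬ x ∣ a := by
    rintro ⟨t, ht⟩
    exact hndvda ⟨t, by rw [haeq, ht]; ring⟩
  have hbnd : ¬ x ∣ b := by
    rintro ⟨t, ht⟩
    exact hndvdb ⟨t, by rw [hbeq, ht]; ring⟩
  have hxK : (x : K) ≠ 0 := fun h => hx0 (by exact_mod_cast h)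
  have hrba : r * (b : K) = (a : K) := by
    apply mul_left_cancel₀ (pow_ne_zero k hxK)
    have h1 : r * ((b₁ : K)) = (a₁ : K) := hrb
    rw [haeq, hbeq] at h1
    push_cast at h1
    linear_combination h1
  -- transfer hypotheses to the ring of integers
  have ha' : ¬ (1 - z) ∣ a := by rw [← hxz]; exact hand
  have hb' : ¬ (1 - z) ∣ b := by rw [← hxz]; exact hbnd
  have hn1' : (3:ℤ) ∣ n - 1 := by
    have := hn3.dvd
    omega
  have hb0K : (b : K) ≠ 0 := by
    intro h
    apply hbnd
    rw [show b = 0 by exact_mod_cast h]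
    exact dvd_zero x
  have hnormO : a * σ a = (n : 𝓞 K) * (b * σ b) := by
    have h1 : ρ r * ρ (b:K) = ρ (a:K) := by rw [← map_mul, hrba]
    have h2 : ((a:K)) * ρ ((a:K)) = (n:K) * (((b:K)) * ρ ((b:K))) := by
      calc (a:K) * ρ (a:K) = (r * (b:K)) * (ρ r * ρ (b:K)) := by rw [hrba, h1]
        _ = (r * ρ r) * ((b:K) * ρ (b:K)) := by ring
        _ = (n:K) * (((b:K)) * ρ ((b:K))) := by rw [hn]
    have h3 : ((a * σ a : 𝓞 K) : K) = (((n : 𝓞 K) * (b * σ b) : 𝓞 K) : K) := by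
      push_cast [hσcoe]
      exact_mod_cast h2
    exact_mod_cast h3
  -- translation of the valuation condition
  have hbv1 : v.intValuation b = 1 := hunit b hbnd
  have hofAdd4 : (-((4:ℕ):ℤ)) = (-4 : ℤ) := by norm_num
  have hgoal : ∀ w₀ : 𝓞 K,
      (v.valuation K ((w₀:K) * r - 1) ≤ (Multiplicative.ofAdd (-4:ℤ) : Multiplicative ℤ)) ↔
        x ^ 4 ∣ (w₀ * a - b) := by
    intro w₀
    have heq : ((w₀ * a - b : 𝓞 K) : K) = ((w₀:K) * r - 1) * (b:K) := by
      push_cast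
      linear_combination ((w₀:K)) * hrba.symm
    have h2 : v.valuation K (((w₀ * a - b : 𝓞 K) : K)) = v.valuation K ((w₀:K) * r - 1) := by
      rw [heq, Valuation.map_mul]
      have h3 : v.valuation K ((b:K)) = 1 := by
        rw [v.valuation_of_algebraMap (K := K) b, hbv1]
      rw [h3, mul_one]
    rw [← h2, v.valuation_of_algebraMap (K := K) (w₀ * a - b)]
    rw [← hofAdd4]
    exact hdvd_iff (w₀ * a - b) 4
  -- apply the core lemmas
  obtain ⟨ε₀, m₀, hε₀, hex⟩ := core_exists z σ a b n hz9 hω hpr hσz hdig ha' hb' hn1' hnormO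
  have hex' : x ^ 4 ∣ ε₀ * z ^ (m₀:ℕ) * a - b := by rw [hxz]; exact hex
  refine ⟨((ε₀ * z ^ (m₀:ℕ) : 𝓞 K) : K), ⟨⟨(ε₀:K), ?_, m₀, by push_cast [hzK]; ring⟩, ?_⟩, ?_⟩
  · rcases hε₀ with h | h
    · left; rw [h]; push_cast; ring
    · right; rw [h]; push_cast; ring
  · exact (hgoal _).mpr hex'
  · rintro w ⟨⟨ε, hε, m, rfl⟩, hval⟩
    obtain ⟨ε₁, hε₁, hε₁K⟩ : ∃ ε₁ : 𝓞 K, (ε₁ = 1 ∨ ε₁ = -1) ∧ (ε₁ : K) = ε := by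
      rcases hε with rfl | rfl
      · exact ⟨1, Or.inl rfl, by push_cast; ring⟩
      · exact ⟨-1, Or.inr rfl, by push_cast; ring⟩
    have hcoew : ε * ζ ^ (m:ℕ) = ((ε₁ * z ^ (m:ℕ) : 𝓞 K) : K) := by
      rw [← hε₁K, ← hzK]; push_cast; ring
    have hdvd1 : x ^ 4 ∣ ε₁ * z ^ (m:ℕ) * a - b := (hgoal _).mp (by rw [← hcoew]; exact hval)
    have hdvd1' : (1 - z) ^ 4 ∣ ε₁ * z ^ (m:ℕ) * a - b := by rw [← hxz]; exact hdvd1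
    have hdvd0' : (1 - z) ^ 4 ∣ ε₀ * z ^ (m₀:ℕ) * a - b := hex
    have hu := core_uniq z hz9 hω hpr a b ha' ε₁ ε₀ hε₁ hε₀ m m₀ hdvd1' hdvd0'
    rw [hcoew, hu]
end

section
/- Let R = ℤ[√−2] (the ring of integers of ℚ(√−2)), let η = √−2, and consider the quotient ring R/(η⁵) (note η⁵ = 4η). The unit group (R/(η⁵))^× has order 16 and is the internal direct product of the cyclic subgroups generated by the classes of 1 + η, −1, and 5, which have orders 4, 2, and 2 respectively; in particular (R/(η⁵))^× is isomorphic to ℤ/4ℤ × ℤ/2ℤ × ℤ/2ℤ. -/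
section Aux

lemma eta5 : (Zsqrtd.sqrtd : ℤ√(-2)) ^ 5 = ⟨0, 4⟩ := by
  ext <;> simp [pow_succ, Zsqrtd.re_mul, Zsqrtd.im_mul]

lemma dvd_iff' (z : ℤ√(-2)) : (Zsqrtd.sqrtd : ℤ√(-2)) ^ 5 ∣ z ↔ 8 ∣ z.re ∧ 4 ∣ z.im := by
  rw [eta5]
  constructor
  · rintro ⟨w, rfl⟩
    simp only [Zsqrtd.re_mul, Zsqrtd.im_mul]
    exact ⟨⟨-w.im, by ring⟩, ⟨w.re, by ring⟩⟩
  · rintro ⟨⟨m, hm⟩, ⟨n, hn⟩⟩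
    exact ⟨⟨n, -m⟩, by ext <;> simp [Zsqrtd.re_mul, Zsqrtd.im_mul, hm, hn]⟩

local notation "I2" => Ideal.span {(Zsqrtd.sqrtd : ℤ√(-2)) ^ 5}
local notation "mk2" => Ideal.Quotient.mk I2
local notation "η" => (Zsqrtd.sqrtd : ℤ√(-2))

lemma mk_eq_mk' (z w : ℤ√(-2)) : mk2 z = mk2 w ↔ 8 ∣ (z - w).re ∧ 4 ∣ (z - w).im := by
  rw [Ideal.Quotient.mk_eq_mk_iff_sub_mem, Ideal.mem_span_singleton, dvd_iff']

lemma mk_pow_eq_one' (z : ℤ√(-2)) (n : ℕ) :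
    (mk2 z) ^ n = 1 ↔ 8 ∣ (z ^ n - 1).re ∧ 4 ∣ (z ^ n - 1).im := by
  rw [← map_pow, show (1 : ℤ√(-2) ⧸ I2) = mk2 1 from (map_one _).symm, mk_eq_mk']

def g' (t : Fin 4 × Fin 2 × Fin 2) : ℤ√(-2) :=
  (1 + η) ^ (t.1 : ℕ) * (-1) ^ (t.2.1 : ℕ) * 5 ^ (t.2.2 : ℕ)

lemma g'_inj : ∀ t s : Fin 4 × Fin 2 × Fin 2,
    8 ∣ (g' t - g' s).re ∧ 4 ∣ (g' t - g' s).im → t = s := by decide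

lemma g'_surj : ∀ a b : ℤ, 0 ≤ a → a < 8 → ¬ (2 ∣ a) → 0 ≤ b → b < 4 →
    ∃ t : Fin 4 × Fin 2 × Fin 2, 8 ∣ (a - (g' t).re) ∧ 4 ∣ (b - (g' t).im) := by
  intro a b h1 h2 h3 h4 h5
  interval_cases a <;> [skip; interval_cases b; skip; interval_cases b; skip;
    interval_cases b; skip; interval_cases b] <;>
    first | decide | (exact absurd (by norm_num) h3)

lemma mk_g' (t : Fin 4 × Fin 2 × Fin 2) :
    mk2 (g' t) = mk2 (1 + η) ^ (t.1 : ℕ) * mk2 (-1 : ℤ√(-2)) ^ ((t.2.1 : ℕ)) *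
      mk2 (5 : ℤ√(-2)) ^ (t.2.2 : ℕ) := by
  simp [g', map_mul, map_pow]

/-- every unit has a representative product decomposition, uniquely -/
lemma key' (u : (ℤ√(-2) ⧸ I2)ˣ) :
    ∃! t : Fin 4 × Fin 2 × Fin 2, (u : ℤ√(-2) ⧸ I2) = mk2 (g' t) := by
  obtain ⟨z, hz⟩ := Ideal.Quotient.mk_surjective (u : ℤ√(-2) ⧸ I2)
  obtain ⟨w, hw⟩ := Ideal.Quotient.mk_surjective ((u⁻¹ : _ˣ) : ℤ√(-2) ⧸ I2)
  have hzw : mk2 (z * w) = mk2 1 := by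
    rw [map_mul, hz, hw, map_one, Units.mul_inv]
  rw [mk_eq_mk'] at hzw
  have hodd : ¬ (2 ∣ z.re) := by
    intro h2
    obtain ⟨k, hk⟩ := hzw.1
    obtain ⟨j, hj⟩ := h2
    have : z.re * w.re = 2 * (j * w.re) := by rw [hj]; ring
    have h8 : (z * w - 1).re = z.re * w.re + (-2) * z.im * w.im - 1 := by
      simp [Zsqrtd.re_mul]
    rw [h8, this] at hk
    have : (2:ℤ) ∣ 1 := ⟨j * w.re - z.im * w.im - 4 * k, by linarith⟩
    norm_num at this
  have hodd8 : ¬ (2 ∣ z.re % 8) := by omega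
  obtain ⟨t, ht1, ht2⟩ := g'_surj (z.re % 8) (z.im % 4) (Int.emod_nonneg _ (by norm_num))
    (Int.emod_lt_of_pos _ (by norm_num)) hodd8 (Int.emod_nonneg _ (by norm_num))
    (Int.emod_lt_of_pos _ (by norm_num))
  refine ⟨t, ?_, ?_⟩
  · show (u : ℤ√(-2) ⧸ I2) = mk2 (g' t)
    rw [← hz, mk_eq_mk']
    constructor
    · have := ht1; simp only [Zsqrtd.re_sub]; omega
    · have := ht2; simp only [Zsqrtd.im_sub]; omega
  · intro s hs
    have h2 : mk2 (g' s) = mk2 (g' t) := by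
      rw [← hs, ← hz, mk_eq_mk']
      constructor
      · have := ht1; simp only [Zsqrtd.re_sub]; omega
      · have := ht2; simp only [Zsqrtd.im_sub]; omega
    rw [mk_eq_mk'] at h2
    exact g'_inj s t h2

lemma pow_mod_eq {G : Type*} [Monoid G] (g : G) {k : ℕ} (h : g ^ k = 1) (n : ℕ) :
    g ^ (n % k) = g ^ n := by
  conv_rhs => rw [← Nat.mod_add_div n k, pow_add, pow_mul, h, one_pow, mul_one]

end Aux

section Main

local notation "I2" => Ideal.span {(Zsqrtd.sqrtd : ℤ√(-2)) ^ 5}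
local notation "mk2" => Ideal.Quotient.mk I2
local notation "η" => (Zsqrtd.sqrtd : ℤ√(-2))

lemma pow4_one : (mk2 (1 + η)) ^ 4 = 1 := by
  rw [mk_pow_eq_one']; decide

lemma neg_one_sq_one : (mk2 (-1 : ℤ√(-2))) ^ 2 = 1 := by
  rw [mk_pow_eq_one']; decide

lemma five_sq_one : (mk2 (5 : ℤ√(-2))) ^ 2 = 1 := by
  rw [mk_pow_eq_one']; decide

lemma order1 : orderOf (mk2 (1 + η)) = 4 := by
  rw [orderOf_eq_iff (by norm_num)]
  refine ⟨pow4_one, ?_⟩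
  intro m hm hm'
  rw [Ne, mk_pow_eq_one']
  interval_cases m <;> decide

lemma order2 : orderOf (mk2 (-1 : ℤ√(-2))) = 2 := by
  rw [orderOf_eq_iff (by norm_num)]
  refine ⟨neg_one_sq_one, ?_⟩
  intro m hm hm'
  rw [Ne, mk_pow_eq_one']
  interval_cases m <;> decide

lemma order3 : orderOf (mk2 (5 : ℤ√(-2))) = 2 := by
  rw [orderOf_eq_iff (by norm_num)]
  refine ⟨five_sq_one, ?_⟩
  intro m hm hm'
  rw [Ne, mk_pow_eq_one']
  interval_cases m <;> decide

noncomputable def u1 : (ℤ√(-2) ⧸ I2)ˣ :=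
  Units.mkOfMulEqOne (mk2 (1 + η)) (mk2 (1 + η) ^ 3) (by rw [← pow_succ']; exact pow4_one)

noncomputable def u2 : (ℤ√(-2) ⧸ I2)ˣ :=
  Units.mkOfMulEqOne (mk2 (-1 : ℤ√(-2))) (mk2 (-1 : ℤ√(-2))) (by rw [← sq]; exact neg_one_sq_one)

noncomputable def u3 : (ℤ√(-2) ⧸ I2)ˣ :=
  Units.mkOfMulEqOne (mk2 (5 : ℤ√(-2))) (mk2 (5 : ℤ√(-2))) (by rw [← sq]; exact five_sq_one)

noncomputable def F (t : Fin 4 × Fin 2 × Fin 2) : (ℤ√(-2) ⧸ I2)ˣ :=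
  u1 ^ (t.1 : ℕ) * u2 ^ (t.2.1 : ℕ) * u3 ^ (t.2.2 : ℕ)

lemma F_val (t : Fin 4 × Fin 2 × Fin 2) : ((F t : (ℤ√(-2) ⧸ I2)ˣ) : ℤ√(-2) ⧸ I2) = mk2 (g' t) := by
  rw [mk_g']
  simp only [F, Units.val_mul, Units.val_pow_eq_pow_val, u1, u2, u3, Units.val_mkOfMulEqOne]

lemma key2 (u : (ℤ√(-2) ⧸ I2)ˣ) : ∃! t : Fin 4 × Fin 2 × Fin 2, u = F t := by
  obtain ⟨t, ht, hu⟩ := key' u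
  refine ⟨t, Units.ext (by rw [F_val]; exact ht), fun s hs => hu s (by rw [hs, F_val])⟩

noncomputable def eqv : (Fin 4 × Fin 2 × Fin 2) ≃ (ℤ√(-2) ⧸ I2)ˣ :=
  Equiv.ofBijective F ⟨fun t s h => (key2 (F t)).unique rfl h,
    fun u => ((key2 u).exists).imp fun t ht => ht.symm⟩

lemma card16 : Nat.card ((ℤ√(-2) ⧸ I2)ˣ) = 16 := by
  rw [Nat.card_congr eqv.symm]; simp


lemma u1_pow4 : u1 ^ 4 = 1 := Units.ext (by
  simp only [u1, Units.val_pow_eq_pow_val, Units.val_mkOfMulEqOne, Units.val_one]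
  exact pow4_one)

lemma u2_pow2 : u2 ^ 2 = 1 := Units.ext (by
  simp only [u2, Units.val_pow_eq_pow_val, Units.val_mkOfMulEqOne, Units.val_one]
  exact neg_one_sq_one)

lemma u3_pow2 : u3 ^ 2 = 1 := Units.ext (by
  simp only [u3, Units.val_pow_eq_pow_val, Units.val_mkOfMulEqOne, Units.val_one]
  exact five_sq_one)

lemma F_inj : Function.Injective F := fun t s h => (key2 (F t)).unique rfl h

noncomputable def phi : Multiplicative (ZMod 4) × Multiplicative (ZMod 2) × Multiplicative (ZMod 2)
    →* (ℤ√(-2) ⧸ I2)ˣ :=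
  MonoidHom.mk' (fun p => u1 ^ (p.1.toAdd.val) * u2 ^ (p.2.1.toAdd.val) * u3 ^ (p.2.2.toAdd.val))
    (by
      rintro ⟨a1, a2, a3⟩ ⟨b1, b2, b3⟩
      simp only [Prod.fst_mul, Prod.snd_mul, toAdd_mul, ZMod.val_add,
        pow_mod_eq _ u1_pow4, pow_mod_eq _ u2_pow2, pow_mod_eq _ u3_pow2, pow_add]
      rw [mul_mul_mul_comm (u1 ^ (Multiplicative.toAdd a1).val),
        mul_mul_mul_comm (u1 ^ (Multiplicative.toAdd a1).val * u2 ^ (Multiplicative.toAdd a2).val)])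

lemma phi_eq_F (p : Multiplicative (ZMod 4) × Multiplicative (ZMod 2) × Multiplicative (ZMod 2)) :
    phi p = F (⟨p.1.toAdd.val, ZMod.val_lt _⟩, ⟨p.2.1.toAdd.val, ZMod.val_lt _⟩,
      ⟨p.2.2.toAdd.val, ZMod.val_lt _⟩) := rfl

lemma phi_bij : Function.Bijective phi := by
  constructor
  · intro p q h
    rw [phi_eq_F, phi_eq_F] at h
    have heq := F_inj h
    have h1 : (Multiplicative.toAdd p.1).val = (Multiplicative.toAdd q.1).val :=
      congrArg (fun t : Fin 4 × Fin 2 × Fin 2 => (t.1 : ℕ)) heq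
    have h2 : (Multiplicative.toAdd p.2.1).val = (Multiplicative.toAdd q.2.1).val :=
      congrArg (fun t : Fin 4 × Fin 2 × Fin 2 => (t.2.1 : ℕ)) heq
    have h3 : (Multiplicative.toAdd p.2.2).val = (Multiplicative.toAdd q.2.2).val :=
      congrArg (fun t : Fin 4 × Fin 2 × Fin 2 => (t.2.2 : ℕ)) heq
    have e1 := congrArg (Nat.cast : ℕ → ZMod 4) h1
    have e2 := congrArg (Nat.cast : ℕ → ZMod 2) h2
    have e3 := congrArg (Nat.cast : ℕ → ZMod 2) h3
    rw [ZMod.natCast_val, ZMod.natCast_val, ZMod.cast_id, ZMod.cast_id] at e1 e2 e3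
    exact Prod.ext (Multiplicative.toAdd.injective e1)
      (Prod.ext (Multiplicative.toAdd.injective e2) (Multiplicative.toAdd.injective e3))
  · intro u
    obtain ⟨t, ht, -⟩ := key2 u
    refine ⟨(Multiplicative.ofAdd ((t.1 : ℕ) : ZMod 4), Multiplicative.ofAdd ((t.2.1 : ℕ) : ZMod 2),
      Multiplicative.ofAdd ((t.2.2 : ℕ) : ZMod 2)), ?_⟩
    rw [phi_eq_F, ht]
    congr 1
    refine Prod.ext ?_ (Prod.ext ?_ ?_) <;>
      simp [Fin.ext_iff, ZMod.val_natCast, Nat.mod_eq_of_lt, Fin.is_lt, Fin.is_le]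

end Main


/-- Let `R = ℤ[√-2]`, `η = √-2`, and consider `R ⧸ (η⁵)`. The unit group `(R ⧸ (η⁵))ˣ` has
order 16, it is the internal direct product of the cyclic subgroups generated by the classes
of `1 + η`, `-1` and `5` (of orders 4, 2 and 2 respectively), and hence it is isomorphic to
`ℤ/4ℤ × ℤ/2ℤ × ℤ/2ℤ`. -/
theorem stmt_14 :
    Nat.card ((ℤ√(-2) ⧸ Ideal.span {(Zsqrtd.sqrtd : ℤ√(-2)) ^ 5})ˣ) = 16 ∧
    orderOf (Ideal.Quotient.mk (Ideal.span {(Zsqrtd.sqrtd : ℤ√(-2)) ^ 5})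
      (1 + Zsqrtd.sqrtd)) = 4 ∧
    orderOf (Ideal.Quotient.mk (Ideal.span {(Zsqrtd.sqrtd : ℤ√(-2)) ^ 5})
      (-1 : ℤ√(-2))) = 2 ∧
    orderOf (Ideal.Quotient.mk (Ideal.span {(Zsqrtd.sqrtd : ℤ√(-2)) ^ 5})
      (5 : ℤ√(-2))) = 2 ∧
    (∀ u : (ℤ√(-2) ⧸ Ideal.span {(Zsqrtd.sqrtd : ℤ√(-2)) ^ 5})ˣ,
      ∃! t : Fin 4 × Fin 2 × Fin 2,
        (u : ℤ√(-2) ⧸ Ideal.span {(Zsqrtd.sqrtd : ℤ√(-2)) ^ 5}) =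
          Ideal.Quotient.mk (Ideal.span {(Zsqrtd.sqrtd : ℤ√(-2)) ^ 5})
              (1 + Zsqrtd.sqrtd) ^ (t.1 : ℕ) *
            Ideal.Quotient.mk (Ideal.span {(Zsqrtd.sqrtd : ℤ√(-2)) ^ 5})
              (-1 : ℤ√(-2)) ^ (t.2.1 : ℕ) *
            Ideal.Quotient.mk (Ideal.span {(Zsqrtd.sqrtd : ℤ√(-2)) ^ 5})
              (5 : ℤ√(-2)) ^ (t.2.2 : ℕ)) ∧
    Nonempty ((ℤ√(-2) ⧸ Ideal.span {(Zsqrtd.sqrtd : ℤ√(-2)) ^ 5})ˣ ≃*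
      Multiplicative (ZMod 4) × Multiplicative (ZMod 2) × Multiplicative (ZMod 2)) := by
  refine ⟨card16, order1, order2, order3, ?_, ⟨(MulEquiv.ofBijective phi phi_bij).symm⟩⟩
  intro u
  obtain ⟨t, ht, hu⟩ := key' u
  exact ⟨t, by rw [ht, mk_g'], fun s hs => hu s (show _ = Ideal.Quotient.mk _ (g' s) by rw [mk_g']; exact hs)⟩
end

section
/- Let R = ℤ[i] be the Gaussian integers and η = 1 − i. There exists a group homomorphism χ from the unit group (R/(η³))^× to the multiplicative group ℂ^× such that: (i) χ(class of i) = i; (ii) for every odd integer a, χ(class of a) = 1 if a ≡ 1 (mod 4) and χ(class of a) = −1 if a ≡ 3 (mod 4); and (iii) χ(class of c − di) is the complex conjugate of χ(class of c + di) for every c + di ∈ ℤ[i] whose class in R/(η³) is a unit. -/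
open scoped ComplexConjugate

namespace Stmt16Aux

local notation "η" => (1 - Zsqrtd.sqrtd : GaussianInt)

lemma eta3 : (η ^ 3 : GaussianInt) = ⟨-2, -2⟩ := by
  ext <;> simp [pow_succ, Zsqrtd.re_mul, Zsqrtd.im_mul]

lemma dvd_eta3_iff (z : GaussianInt) :
    (η ^ 3 : GaussianInt) ∣ z ↔ 4 ∣ z.re + z.im ∧ 4 ∣ z.re - z.im := by
  rw [eta3]
  constructor
  · rintro ⟨m, rfl⟩
    simp [Zsqrtd.re_mul, Zsqrtd.im_mul]
    omega
  · rintro ⟨⟨p, hp⟩, ⟨q, hq⟩⟩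
    refine ⟨⟨-p, q⟩, ?_⟩
    ext <;> simp [Zsqrtd.re_mul, Zsqrtd.im_mul] <;> omega

lemma dvd_eta_iff (z : GaussianInt) :
    (η : GaussianInt) ∣ z ↔ 2 ∣ z.re + z.im := by
  constructor
  · rintro ⟨m, rfl⟩
    simp [Zsqrtd.re_mul, Zsqrtd.im_mul, Zsqrtd.re_sub, Zsqrtd.im_sub]
    omega
  · rintro ⟨p, hp⟩
    refine ⟨⟨z.re - p, p⟩, ?_⟩
    ext <;> simp [Zsqrtd.re_mul, Zsqrtd.im_mul] <;> omega

noncomputable abbrev mk := Ideal.Quotient.mk (Ideal.span {(η ^ 3 : GaussianInt)})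

abbrev Q := GaussianInt ⧸ Ideal.span {(η ^ 3 : GaussianInt)}

lemma mk_eq_mk_iff (z w : GaussianInt) :
    mk z = mk w ↔ 4 ∣ (z.re - w.re) + (z.im - w.im) ∧ 4 ∣ (z.re - w.re) - (z.im - w.im) := by
  rw [Ideal.Quotient.mk_eq_mk_iff_sub_mem, Ideal.mem_span_singleton, dvd_eta3_iff]
  simp [Zsqrtd.re_sub, Zsqrtd.im_sub]

lemma mk_star_eq (z w : GaussianInt) (h : mk z = mk w) : mk (star z) = mk (star w) := by
  rw [mk_eq_mk_iff] at h ⊢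
  simp only [Zsqrtd.re_star, Zsqrtd.im_star]
  omega

lemma i_sq : (Zsqrtd.sqrtd ^ 2 : GaussianInt) = ⟨-1, 0⟩ := by
  ext <;> simp [pow_succ, Zsqrtd.re_mul, Zsqrtd.im_mul]

lemma i_cube : (Zsqrtd.sqrtd ^ 3 : GaussianInt) = ⟨0, -1⟩ := by
  ext <;> simp [pow_succ, Zsqrtd.re_mul, Zsqrtd.im_mul]

lemma i_four : (Zsqrtd.sqrtd ^ 4 : GaussianInt) = 1 := by
  ext <;> simp [pow_succ, Zsqrtd.re_mul, Zsqrtd.im_mul]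

lemma neg_i : (-Zsqrtd.sqrtd : GaussianInt) = Zsqrtd.sqrtd ^ 3 := by
  rw [i_cube]; ext <;> simp

lemma classify (u : Qˣ) :
    ∃ j : ℕ, (u : Q) = mk (Zsqrtd.sqrtd ^ j) := by
  obtain ⟨z, hz⟩ := Ideal.Quotient.mk_surjective (I := Ideal.span {(η ^ 3 : GaussianInt)})
    (u : Q)
  obtain ⟨w, hw⟩ := Ideal.Quotient.mk_surjective (I := Ideal.span {(η ^ 3 : GaussianInt)})
    ((u⁻¹ : Qˣ) : Q)
  have hmul : mk (z * w) = mk 1 := by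
    rw [map_mul, map_one, hz, hw, Units.mul_inv]
  have hdvd : (η ^ 3 : GaussianInt) ∣ z * w - 1 := by
    rw [← Ideal.mem_span_singleton, ← Ideal.Quotient.mk_eq_mk_iff_sub_mem]
    exact hmul
  have hodd : ¬ 2 ∣ z.re + z.im := by
    intro h2
    have hz1 : (η : GaussianInt) ∣ z := (dvd_eta_iff z).2 h2
    have h1 : (η : GaussianInt) ∣ 1 := by
      have h3 : (η : GaussianInt) ∣ z * w - 1 :=
        dvd_trans (dvd_pow_self (η : GaussianInt) (by norm_num)) hdvd
      have := dvd_sub (hz1.mul_right w) h3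
      simpa using this
    rw [dvd_eta_iff] at h1
    simp at h1
  have H : (4 ∣ (z.re - 1) + z.im ∧ 4 ∣ (z.re - 1) - z.im) ∨
      (4 ∣ z.re + (z.im - 1) ∧ 4 ∣ z.re - (z.im - 1)) ∨
      (4 ∣ (z.re + 1) + z.im ∧ 4 ∣ (z.re + 1) - z.im) ∨
      (4 ∣ z.re + (z.im + 1) ∧ 4 ∣ z.re - (z.im + 1)) := by omega
  rcases H with h | h | h | h
  · exact ⟨0, by rw [← hz, pow_zero]; rw [mk_eq_mk_iff]; simpa using h⟩
  · exact ⟨1, by rw [← hz, pow_one]; rw [mk_eq_mk_iff]; simpa using h⟩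
  · exact ⟨2, by rw [← hz, i_sq]; rw [mk_eq_mk_iff]; simpa using h⟩
  · exact ⟨3, by rw [← hz, i_cube]; rw [mk_eq_mk_iff]; simpa using h⟩

lemma i_mul_neg_i : (Zsqrtd.sqrtd * -Zsqrtd.sqrtd : GaussianInt) = 1 := by
  ext <;> simp [Zsqrtd.re_mul, Zsqrtd.im_mul]

noncomputable def g : Qˣ where
  val := mk Zsqrtd.sqrtd
  inv := mk (-Zsqrtd.sqrtd)
  val_inv := by rw [← map_mul, i_mul_neg_i, map_one]
  inv_val := by rw [← map_mul, mul_comm, i_mul_neg_i, map_one]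

lemma g_pow_val (j : ℕ) : ((g ^ j : Qˣ) : Q) = mk (Zsqrtd.sqrtd ^ j) := by
  rw [Units.val_pow_eq_pow_val]
  show (mk Zsqrtd.sqrtd) ^ j = _
  rw [← map_pow]

lemma g_pow_four : g ^ 4 = 1 := by
  apply Units.ext
  rw [g_pow_val, i_four, map_one, Units.val_one]

lemma classify' (u : Qˣ) : ∃ j : ℕ, u = g ^ j := by
  obtain ⟨j, hj⟩ := classify u
  exact ⟨j, Units.ext (by rw [hj, g_pow_val])⟩

noncomputable def uI : ℂˣ := Units.mk0 Complex.I Complex.I_ne_zero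

lemma uI_pow_four : uI ^ 4 = 1 := by
  apply Units.ext
  simp [uI, pow_succ, Complex.I_mul_I]

open Classical in
noncomputable def chiFun : Qˣ → ℂˣ := fun u =>
  if u = g then uI else if u = g ^ 2 then uI ^ 2 else if u = g ^ 3 then uI ^ 3 else 1

lemma mk_ne (z w : GaussianInt)
    (h : ¬ (4 ∣ (z.re - w.re) + (z.im - w.im) ∧ 4 ∣ (z.re - w.re) - (z.im - w.im))) :
    mk z ≠ mk w := by
  intro hc
  rw [mk_eq_mk_iff] at hc
  exact h hc

lemma p0 : (Zsqrtd.sqrtd ^ 0 : GaussianInt) = ⟨1, 0⟩ := by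
  rw [pow_zero]; ext <;> simp

lemma p1 : (Zsqrtd.sqrtd ^ 1 : GaussianInt) = ⟨0, 1⟩ := by
  rw [pow_one]; ext <;> simp

lemma gp_ne (j k : ℕ) (hj : j < 4) (hk : k < 4) (h : j ≠ k) : g ^ j ≠ g ^ k := by
  intro hc
  have hv : mk (Zsqrtd.sqrtd ^ j) = mk (Zsqrtd.sqrtd ^ k) := by
    rw [← g_pow_val, ← g_pow_val, hc]
  rw [mk_eq_mk_iff] at hv
  interval_cases j <;> interval_cases k <;>
    first
      | exact h rfl
      | (simp only [p0, p1, i_sq, i_cube] at hv; omega)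

lemma chiFun_pow (j : ℕ) : chiFun (g ^ j) = uI ^ j := by
  have n01 : (1 : Qˣ) ≠ g := by simpa using gp_ne 0 1 (by norm_num) (by norm_num) (by norm_num)
  have n02 : (1 : Qˣ) ≠ g ^ 2 := by
    simpa using gp_ne 0 2 (by norm_num) (by norm_num) (by norm_num)
  have n03 : (1 : Qˣ) ≠ g ^ 3 := by
    simpa using gp_ne 0 3 (by norm_num) (by norm_num) (by norm_num)
  have n21 : g ^ 2 ≠ g := by simpa using gp_ne 2 1 (by norm_num) (by norm_num) (by norm_num)
  have n31 : g ^ 3 ≠ g := by simpa using gp_ne 3 1 (by norm_num) (by norm_num) (by norm_num)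
  have n32 : g ^ 3 ≠ g ^ 2 := gp_ne 3 2 (by norm_num) (by norm_num) (by norm_num)
  rw [pow_eq_pow_mod j g_pow_four, pow_eq_pow_mod j uI_pow_four]
  have h4 : j % 4 < 4 := Nat.mod_lt _ (by norm_num)
  set r := j % 4 with hr
  interval_cases r
  · simp [chiFun, n01, n02, n03]
  · simp [chiFun]
  · simp [chiFun, n21]
  · simp [chiFun, n31, n32]

noncomputable def chi : Qˣ →* ℂˣ where
  toFun := chiFun
  map_one' := by
    have := chiFun_pow 0
    simpa using this
  map_mul' := by
    intro x y
    obtain ⟨j, rfl⟩ := classify' x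
    obtain ⟨k, rfl⟩ := classify' y
    show chiFun (g ^ j * g ^ k) = chiFun (g ^ j) * chiFun (g ^ k)
    rw [← pow_add, chiFun_pow, chiFun_pow, chiFun_pow, pow_add]

end Stmt16Aux

/-- Let `R = ℤ[i]` be the Gaussian integers and `η = 1 - i`. There is a group homomorphism
`χ` from `(R ⧸ (η³))ˣ` to `ℂˣ` such that:
(i)   the value of `χ` on the class of `i` is `i`;
(ii)  for every odd integer `a`, `χ` takes the value `1` on the class of `a` if
      `a ≡ 1 (mod 4)` and the value `-1` if `a ≡ 3 (mod 4)`;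
(iii) `χ` intertwines complex conjugation on `ℤ[i]` (`star`) with complex conjugation
      on `ℂ`. -/
theorem stmt_16 :
    ∃ χ : (GaussianInt ⧸ Ideal.span {(1 - Zsqrtd.sqrtd : GaussianInt) ^ 3})ˣ →* ℂˣ,
      (∀ u : (GaussianInt ⧸ Ideal.span {(1 - Zsqrtd.sqrtd : GaussianInt) ^ 3})ˣ,
        (u : GaussianInt ⧸ Ideal.span {(1 - Zsqrtd.sqrtd : GaussianInt) ^ 3}) =
          Ideal.Quotient.mk (Ideal.span {(1 - Zsqrtd.sqrtd : GaussianInt) ^ 3})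
            (Zsqrtd.sqrtd : GaussianInt) →
        (χ u : ℂ) = Complex.I) ∧
      (∀ (u : (GaussianInt ⧸ Ideal.span {(1 - Zsqrtd.sqrtd : GaussianInt) ^ 3})ˣ) (a : ℤ),
        Odd a →
        (u : GaussianInt ⧸ Ideal.span {(1 - Zsqrtd.sqrtd : GaussianInt) ^ 3}) =
          Ideal.Quotient.mk (Ideal.span {(1 - Zsqrtd.sqrtd : GaussianInt) ^ 3})
            (a : GaussianInt) →
        (a % 4 = 1 → χ u = 1) ∧ (a % 4 = 3 → χ u = -1)) ∧
      (∀ (u v : (GaussianInt ⧸ Ideal.span {(1 - Zsqrtd.sqrtd : GaussianInt) ^ 3})ˣ)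
          (z : GaussianInt),
        (u : GaussianInt ⧸ Ideal.span {(1 - Zsqrtd.sqrtd : GaussianInt) ^ 3}) =
          Ideal.Quotient.mk (Ideal.span {(1 - Zsqrtd.sqrtd : GaussianInt) ^ 3}) z →
        (v : GaussianInt ⧸ Ideal.span {(1 - Zsqrtd.sqrtd : GaussianInt) ^ 3}) =
          Ideal.Quotient.mk (Ideal.span {(1 - Zsqrtd.sqrtd : GaussianInt) ^ 3}) (star z) →
        (χ v : ℂ) = conj (χ u : ℂ)) := by
  open Stmt16Aux in
  refine ⟨Stmt16Aux.chi, ?_, ?_, ?_⟩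
  · intro u hu
    have hug : u = g := Units.ext (by rw [hu]; rfl)
    subst hug
    have e1 : Stmt16Aux.chi g = uI := by
      have := chiFun_pow 1
      exact (by simpa using this : chiFun g = uI)
    rw [e1]
    rfl
  · intro u a _ hu
    constructor
    · intro h1
      have hu1 : u = 1 := by
        apply Units.ext
        rw [hu, Units.val_one, ← map_one (Ideal.Quotient.mk _)]
        rw [show ((Ideal.Quotient.mk (Ideal.span {(1 - Zsqrtd.sqrtd : GaussianInt) ^ 3}))
          = Stmt16Aux.mk) from rfl, mk_eq_mk_iff]
        simp
        omega
      rw [hu1, map_one]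
    · intro h3
      have hu2 : u = g ^ 2 := by
        apply Units.ext
        rw [hu, g_pow_val, i_sq]
        rw [show ((Ideal.Quotient.mk (Ideal.span {(1 - Zsqrtd.sqrtd : GaussianInt) ^ 3}))
          = Stmt16Aux.mk) from rfl, mk_eq_mk_iff]
        simp
        omega
      rw [hu2]
      have e2 : Stmt16Aux.chi (g ^ 2) = uI ^ 2 := chiFun_pow 2
      rw [e2]
      apply Units.ext
      simp [uI, sq, Complex.I_mul_I]
  · intro u v z hu hv
    obtain ⟨j, rfl⟩ := classify' u
    have hz : Stmt16Aux.mk z = Stmt16Aux.mk (Zsqrtd.sqrtd ^ j) := by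
      rw [← hu, g_pow_val]
    have hstar : Stmt16Aux.mk (star z) = Stmt16Aux.mk (star (Zsqrtd.sqrtd ^ j)) :=
      mk_star_eq _ _ hz
    have h2 : star (Zsqrtd.sqrtd ^ j : GaussianInt) = Zsqrtd.sqrtd ^ (3 * j) := by
      rw [star_pow, show (star Zsqrtd.sqrtd : GaussianInt) = -Zsqrtd.sqrtd from
        (by ext <;> simp), neg_i, ← pow_mul]
    have hv' : v = g ^ (3 * j) := by
      apply Units.ext
      rw [hv, g_pow_val, ← h2, ← hstar]
    rw [hv']
    have e3 : Stmt16Aux.chi (g ^ (3 * j)) = uI ^ (3 * j) := chiFun_pow _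
    have e4 : Stmt16Aux.chi (g ^ j) = uI ^ j := chiFun_pow _
    rw [e3, e4, Units.val_pow_eq_pow_val, Units.val_pow_eq_pow_val]
    show Complex.I ^ (3 * j) = conj (Complex.I ^ j)
    rw [map_pow, Complex.conj_I, pow_mul]
    congr 1
    simp [pow_succ, Complex.I_mul_I]
end

section
/- Let M be a field extension of ℚ₃ of degree 6 that is Galois over ℚ₃ with cyclic Galois group, and suppose M contains an element ω with ω² + ω + 1 = 0 (a primitive cube root of unity). Let L = ℚ₃(ω) ⊆ M. Then there exist a unit α of the ring of integers of L and an element x ∈ M such that x³ = α and M = L(x). -/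
open Polynomial IntermediateField Module

private lemma pow3_inj {m n : ℤ} (h : (3:ℝ) ^ m = 3 ^ n) : m = n :=
  zpow_right_injective₀ (by norm_num) (by norm_num) h

private lemma padic_val_pow {x : ℚ_[3]} (hx : x ≠ 0) (n : ℕ) :
    (x ^ n).valuation = n * x.valuation := by
  induction n with
  | zero => simp
  | succ n ih =>
    rw [pow_succ, Padic.valuation_mul (pow_ne_zero _ hx) hx, ih]
    push_cast; ring

private lemma norm_two_eq : ‖(2 : ℚ_[3])‖ = 1 := by
  have h1 : ‖((2:ℤ) : ℚ_[3])‖ ≤ 1 := Padic.norm_int_le_one 2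
  have h2 : ¬ ‖((2:ℤ) : ℚ_[3])‖ < 1 := by
    rw [Padic.norm_intCast_lt_one_iff]; norm_num
  push_cast at h1 h2
  linarith

private lemma norm_four_eq : ‖(4 : ℚ_[3])‖ = 1 := by
  have h1 : ‖((4:ℤ) : ℚ_[3])‖ ≤ 1 := Padic.norm_int_le_one 4
  have h2 : ¬ ‖((4:ℤ) : ℚ_[3])‖ < 1 := by
    rw [Padic.norm_intCast_lt_one_iff]; norm_num
  push_cast at h1 h2
  linarith

private lemma val_neg_three : (-3 : ℚ_[3]).valuation = 1 := by
  have h0 : (-3 : ℚ_[3]) ≠ 0 := by norm_num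
  have h3 : ((3:ℚ_[3])) ≠ 0 := by norm_num
  have hn : ‖(-3 : ℚ_[3])‖ = ‖(3 : ℚ_[3])‖ := norm_neg _
  rw [Padic.norm_eq_zpow_neg_valuation h0, Padic.norm_eq_zpow_neg_valuation h3] at hn
  have := pow3_inj hn
  have hvp : (3 : ℚ_[3]).valuation = 1 := by
    simpa using Padic.valuation_p (p := 3)
  omega

private lemma val_three : (3 : ℚ_[3]).valuation = 1 := by
  simpa using Padic.valuation_p (p := 3)

/-- no root of X²+X+1 in ℚ₃ -/
private lemma no_root_q3 (r : ℚ_[3]) : r ^ 2 + r + 1 ≠ 0 := by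
  intro h
  have hy : (2*r+1)^2 = -3 := by ring_nf; linear_combination 4 * h
  have hy0 : (2*r+1) ≠ 0 := by
    intro h0
    rw [h0] at hy
    norm_num at hy
  have hv : ((2*r+1)^2 : ℚ_[3]).valuation = (-3 : ℚ_[3]).valuation := by rw [hy]
  rw [padic_val_pow hy0, val_neg_three] at hv
  omega

/-- square roots of 1 + u for small u -/
private lemma sqrt_one_add {u : ℚ_[3]} (hu : ‖u‖ < 1) : ∃ s : ℚ_[3], s ^ 2 = 1 + u := by
  have hu1 : ‖u‖ ≤ 1 := le_of_lt hu
  set u0 : ℤ_[3] := ⟨u, hu1⟩ with hu0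
  have key : ‖(Polynomial.X ^ 2 - Polynomial.C (1 + u0) : Polynomial ℤ_[3]).eval 1‖ <
      ‖(Polynomial.X ^ 2 - Polynomial.C (1 + u0) : Polynomial ℤ_[3]).derivative.eval 1‖ ^ 2 := by
    have h2 : ‖(2 : ℤ_[3])‖ = 1 := by
      have := PadicInt.padic_norm_e_of_padicInt (2 : ℤ_[3])
      rw [← this]; push_cast; exact norm_two_eq
    simp only [Polynomial.derivative_sub, Polynomial.derivative_X_pow, Polynomial.derivative_C,
      Polynomial.eval_sub, Polynomial.eval_pow, Polynomial.eval_X, Polynomial.eval_C,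
      Polynomial.eval_mul, Polynomial.eval_natCast, sub_zero, Polynomial.eval_one]
    have he : (1:ℤ_[3])^2 - (1 + u0) = -u0 := by ring
    rw [he]
    have hnu : ‖(-u0 : ℤ_[3])‖ = ‖u‖ := by
      rw [norm_neg, ← PadicInt.padic_norm_e_of_padicInt]
    have h21 : ((2:ℕ):ℤ_[3]) * 1 ^ 1 = (2:ℤ_[3]) := by norm_num
    rw [h21, hnu, h2]
    simpa using hu
  obtain ⟨z, hz, -⟩ := hensels_lemma key
  refine ⟨(z : ℚ_[3]), ?_⟩
  have h1 : (z:ℤ_[3])^2 - (1 + u0) = 0 := by simpa using hz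
  have h2 := congrArg (fun w : ℤ_[3] => (w : ℚ_[3])) h1
  simp only [PadicInt.coe_sub, PadicInt.coe_pow, PadicInt.coe_add, PadicInt.coe_one] at h2
  rw [PadicInt.coe_zero] at h2
  linear_combination h2

set_option maxHeartbeats 1000000

/-- Let `M` be a degree-6 cyclic Galois extension of `ℚ₃` containing a primitive cube
root of unity `ω`, and let `L = ℚ₃(ω)`. Then there are a unit `α` of the ring of integers
of `L` (i.e. `α ∈ L` with both `α` and `α⁻¹` integral over `ℤ₃`) and an element `x ∈ M`
with `x³ = α` and `M = L(x)`. -/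
theorem stmt_17 (M : Type*) [Field M] [Algebra ℚ_[3] M]
    (hdeg : Module.finrank ℚ_[3] M = 6) [IsGalois ℚ_[3] M]
    (hcyc : IsCyclic (M ≃ₐ[ℚ_[3]] M))
    [Algebra ℤ_[3] M] [IsScalarTower ℤ_[3] ℚ_[3] M]
    (ω : M) (hω : ω ^ 2 + ω + 1 = 0) :
    ∃ α x : M, α ∈ IntermediateField.adjoin ℚ_[3] {ω} ∧
      IsIntegral ℤ_[3] α ∧ α ≠ 0 ∧ IsIntegral ℤ_[3] α⁻¹ ∧
      x ^ 3 = α ∧ IntermediateField.adjoin ℚ_[3] {ω, x} = ⊤ := by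
  classical
  have hchar : CharZero M := charZero_of_injective_algebraMap (algebraMap ℚ_[3] M).injective
  have hfin : FiniteDimensional ℚ_[3] M :=
    FiniteDimensional.of_finrank_pos (by rw [hdeg]; norm_num)
  set L : IntermediateField ℚ_[3] M := IntermediateField.adjoin ℚ_[3] {ω} with hLdef
  have hω0 : ω ≠ 0 := by rintro rfl; norm_num at hω
  have hω3 : ω ^ 3 = 1 := by linear_combination (ω - 1) * hω
  have hωmem : ω ∈ L := IntermediateField.subset_adjoin _ _ rfl
  have hωnotQ : ∀ r : ℚ_[3], algebraMap ℚ_[3] M r ≠ ω := by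
    intro r hr
    have h1 : algebraMap ℚ_[3] M (r ^ 2 + r + 1) = 0 := by
      rw [map_add, map_add, map_pow, map_one, hr, hω]
    exact no_root_q3 r ((map_eq_zero_iff _ (algebraMap ℚ_[3] M).injective).mp h1)
  have hωint : IsIntegral ℚ_[3] ω := IsIntegral.of_finite _ _
  have hmin2 : (minpoly ℚ_[3] ω).natDegree = 2 := by
    have hdvd : minpoly ℚ_[3] ω ∣ (X ^ 2 + X + 1) := by
      apply minpoly.dvd
      simp only [map_add, map_pow, aeval_X, map_one]
      exact hω
    have hXdeg : ((X ^ 2 + X + 1 : ℚ_[3][X])).natDegree = 2 := by compute_degree!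
    have hXne : (X ^ 2 + X + 1 : ℚ_[3][X]) ≠ 0 := by
      intro h
      rw [h] at hXdeg
      simp at hXdeg
    have hle : (minpoly ℚ_[3] ω).natDegree ≤ 2 := by
      have := Polynomial.natDegree_le_of_dvd hdvd hXne
      rwa [hXdeg] at this
    have hge : 2 ≤ (minpoly ℚ_[3] ω).natDegree := by
      rw [minpoly.two_le_natDegree_iff hωint]
      rintro ⟨r, hr⟩
      exact hωnotQ r hr
    omega
  have hL2 : Module.finrank ℚ_[3] ↥L = 2 := by
    rw [hLdef, IntermediateField.adjoin.finrank hωint, hmin2]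
  have hLM3 : Module.finrank ↥L M = 3 := by
    have := Module.finrank_mul_finrank ℚ_[3] ↥L M
    rw [hL2, hdeg] at this
    omega
  -- cyclicity of M over L
  have hcyc' : IsCyclic (M ≃ₐ[↥L] M) := by
    let f : (M ≃ₐ[↥L] M) →* (M ≃ₐ[ℚ_[3]] M) :=
      { toFun := fun g => g.restrictScalars ℚ_[3]
        map_one' := rfl
        map_mul' := fun g h => rfl }
    have hfinj : Function.Injective f := AlgEquiv.restrictScalars_injective ℚ_[3]
    have e := MonoidHom.ofInjective hfinj
    haveI : IsCyclic f.range := Subgroup.isCyclic f.range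
    exact isCyclic_of_surjective e.symm e.symm.surjective
  -- primitive cube root of unity in L
  have hprimM : IsPrimitiveRoot ω 3 := by
    refine ⟨hω3, ?_⟩
    intro l hl
    have hmod : ω ^ (l % 3) = 1 := by
      conv at hl => rw [← Nat.div_add_mod l 3]
      rw [pow_add, pow_mul, hω3, one_pow, one_mul] at hl
      exact hl
    have h3 : l % 3 < 3 := Nat.mod_lt _ (by norm_num)
    interval_cases h : l % 3
    · exact Nat.dvd_of_mod_eq_zero h
    · rw [pow_one] at hmod
      rw [hmod] at hω
      norm_num at hω
    · have hωe : ω = -2 := by linear_combination hω - hmod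
      rw [hωe] at hmod
      norm_num at hmod
  set ωL : ↥L := ⟨ω, hωmem⟩ with hωL
  have hprimL : IsPrimitiveRoot ωL 3 := by
    apply IsPrimitiveRoot.of_map_of_injective (f := algebraMap ↥L M)
    · exact hprimM
    · exact (algebraMap ↥L M).injective
  have hK : (primitiveRoots (Module.finrank ↥L M) ↥L).Nonempty := by
    rw [hLM3]
    exact ⟨ωL, (mem_primitiveRoots (by norm_num)).mpr hprimL⟩
  obtain ⟨x, hxpow, hxadj⟩ := exists_root_adjoin_eq_top_of_isCyclic ↥L M hK
  rw [hLM3] at hxpow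
  obtain ⟨aL, haL⟩ := hxpow
  set aM : M := algebraMap ↥L M aL with haM
  have haMx : x ^ 3 = aM := haL.symm
  have haMmem : aM ∈ L := by
    rw [haM, IntermediateField.algebraMap_apply]
    exact aL.2
  -- x is nonzero
  have hx0 : x ≠ 0 := by
    rintro rfl
    rw [IntermediateField.adjoin_zero] at hxadj
    have h1 : Module.finrank ↥L ↥(⊥ : IntermediateField ↥L M) = 1 :=
      IntermediateField.finrank_bot
    rw [hxadj, IntermediateField.finrank_top'] at h1
    omega
  have haM0 : aM ≠ 0 := by rw [← haMx]; exact pow_ne_zero _ hx0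
  have haL0 : aL ≠ 0 := by
    intro h
    apply haM0
    rw [haM, h, map_zero]
  -- generator of the Galois group
  obtain ⟨σ, hσ⟩ := hcyc.exists_generator
  have horder : orderOf σ = 6 := by
    rw [orderOf_eq_card_of_forall_mem_zpowers hσ,
      IsGalois.card_aut_eq_finrank, hdeg]
  have hpowfix : ∀ (g : M ≃ₐ[ℚ_[3]] M) (z : M), g z = z → ∀ n : ℕ, (g ^ n) z = z := by
    intro g z h n
    induction n with
    | zero => simp
    | succ n ih => rw [pow_succ, AlgEquiv.mul_apply, h, ih]
  have hmemfix : ∀ (g : M ≃ₐ[ℚ_[3]] M) (z : M), g z = z →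
      z ∈ IntermediateField.fixedField (Subgroup.zpowers g) := by
    intro g z h
    rintro ⟨g', hg'⟩
    obtain ⟨n, rfl⟩ := (mem_powers_iff_mem_zpowers).mpr hg'
    exact hpowfix g z h n
  have hfixQ : ∀ z : M, σ z = z → ∃ r : ℚ_[3], algebraMap ℚ_[3] M r = z := by
    intro z hz
    have hmem : z ∈ (⊥ : IntermediateField ℚ_[3] M) := by
      rw [← OrderIso.map_bot (IsGalois.intermediateFieldEquivSubgroup
        (F := ℚ_[3]) (E := M)).symm]
      rintro ⟨g, -⟩
      obtain ⟨n, rfl⟩ := (mem_powers_iff_mem_zpowers).mpr (hσ g)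
      exact hpowfix σ z hz n
    rwa [IntermediateField.mem_bot] at hmem
  -- action of σ on ω
  have hσroot : (σ ω) ^ 2 + σ ω + 1 = 0 := by
    have h1 := congrArg σ hω
    simpa only [map_add, map_pow, map_one, map_zero] using h1
  have hσω : σ ω = -ω - 1 := by
    have hf : (σ ω - ω) * (σ ω + ω + 1) = 0 := by linear_combination hσroot - hω
    rcases mul_eq_zero.mp hf with h | h
    · exfalso
      have hfix : σ ω = ω := by linear_combination h
      obtain ⟨r, hr⟩ := hfixQ ω hfix
      exact hωnotQ r hr
    · linear_combination h
  have hσ2ω : (σ ^ 2) ω = ω := by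
    rw [pow_two, AlgEquiv.mul_apply, hσω]
    rw [map_sub, map_neg, map_one, hσω]
    ring
  -- L is the fixed field of ⟨σ²⟩
  have hLle : L ≤ IntermediateField.fixedField (Subgroup.zpowers (σ ^ 2)) := by
    rw [hLdef, IntermediateField.adjoin_le_iff]
    intro z hz
    rw [Set.mem_singleton_iff] at hz
    rw [hz]
    exact hmemfix (σ ^ 2) ω hσ2ω
  have hord2 : orderOf (σ ^ 2) = 3 := by
    rw [orderOf_pow, horder]
    decide
  have hfixcard : Module.finrank
      ↥(IntermediateField.fixedField (Subgroup.zpowers (σ ^ 2))) M = 3 := by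
    rw [IntermediateField.finrank_fixedField_eq_card, Nat.card_zpowers, hord2]
  have hLfix : L = IntermediateField.fixedField (Subgroup.zpowers (σ ^ 2)) := by
    apply IntermediateField.eq_of_le_of_finrank_le' hLle
    rw [hLM3, hfixcard]
  have hfixL : ∀ z : M, z ∈ L → (σ ^ 2) z = z := by
    intro z hz
    have := (hLfix ▸ hz : z ∈ IntermediateField.fixedField (Subgroup.zpowers (σ ^ 2)))
    exact this ⟨σ ^ 2, Subgroup.mem_zpowers _⟩
  -- the element u with σ²x = u x
  have hσ2a : (σ ^ 2) aM = aM := hfixL aM haMmem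
  have hy3 : ((σ ^ 2) x) ^ 3 = x ^ 3 := by
    rw [← map_pow, haMx, hσ2a]
  have h1 : IntermediateField.adjoin ℚ_[3] ({ω} ∪ {x}) = ⊤ := by
    rw [← IntermediateField.adjoin_adjoin_left, ← hLdef, hxadj,
      IntermediateField.restrictScalars_top]
  have h1' : IntermediateField.adjoin ℚ_[3] {ω, x} = ⊤ := by
    rw [← Set.singleton_union]
    exact h1
  set u : M := (σ ^ 2) x * x⁻¹ with hu
  have hux : (σ ^ 2) x = u * x := by
    rw [hu, mul_assoc, inv_mul_cancel₀ hx0, mul_one]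
  have hu3 : u ^ 3 = 1 := by
    rw [hu, mul_pow, hy3, inv_pow]
    field_simp
  have hu0 : u ≠ 0 := by
    intro h
    rw [h] at hu3
    norm_num at hu3
  have hune : u ≠ 1 := by
    intro h
    rw [h, one_mul] at hux
    -- σ² fixes ω and x, so it fixes all of M = ℚ₃(ω, x), contradiction with order 3
    have hxL : x ∈ L := by
      rw [hLfix]
      exact hmemfix (σ ^ 2) x hux
    have htop : (⊤ : IntermediateField ℚ_[3] M) ≤ L := by
      rw [← h1', IntermediateField.adjoin_le_iff]
      rintro z (rfl | rfl)
      · exact hωmem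
      · exact hxL
    have hLtop : L = ⊤ := le_antisymm le_top htop
    rw [hLtop, IntermediateField.finrank_top', hdeg] at hL2
    omega
  have hu2 : u ^ 2 + u + 1 = 0 := by
    have hf : (u - 1) * (u ^ 2 + u + 1) = 0 := by linear_combination hu3
    rcases mul_eq_zero.mp hf with h | h
    · exact absurd (by linear_combination h) hune
    · exact h
  have hσu : σ u = u * u := by
    have hf : (u - ω) * (u + ω + 1) = 0 := by linear_combination hu2 - hω
    rcases mul_eq_zero.mp hf with h | h
    · have huω : u = ω := by linear_combination h
      rw [huω, hσω]
      linear_combination -hω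
    · have huω : u = -ω - 1 := by linear_combination h
      rw [huω, map_sub, map_neg, map_one, hσω]
      linear_combination -hω
  -- t = x σ(x) lies in L and t³ = a σ(a)
  set t : M := x * σ x with ht
  have hσ2σx : (σ ^ 2) (σ x) = (u * u) * σ x := by
    have hc : (σ ^ 2) (σ x) = σ ((σ ^ 2) x) := by
      rw [← AlgEquiv.mul_apply, ← AlgEquiv.mul_apply, pow_mul_comm']
    rw [hc, hux, map_mul, hσu]
  have hσ2t : (σ ^ 2) t = t := by
    rw [ht, map_mul, hux, hσ2σx]
    have : u * x * (u * u * σ x) = u ^ 3 * (x * σ x) := by ring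
    rw [this, hu3, one_mul]
  have htL : t ∈ L := by
    rw [hLfix]
    exact hmemfix _ _ hσ2t
  have hσx0 : σ x ≠ 0 := fun h => hx0 (by
    have := congrArg σ.symm h
    simpa using this)
  have ht0 : t ≠ 0 := mul_ne_zero hx0 hσx0
  set tL : ↥L := ⟨t, htL⟩ with htL'
  have htL0 : tL ≠ 0 := by
    intro h
    apply ht0
    have := congrArg (fun z : ↥L => (z : M)) h
    simpa [htL'] using this
  have haσa : aM * σ aM = t ^ 3 := by
    rw [ht, mul_pow, ← map_pow, haMx]
  -- norm computations
  have hNormAut : ∀ (g : M ≃ₐ[ℚ_[3]] M) (z : M),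
      Algebra.norm ℚ_[3] (g z) = Algebra.norm ℚ_[3] z := by
    intro g z
    apply (algebraMap ℚ_[3] M).injective
    rw [Algebra.norm_eq_prod_automorphisms, Algebra.norm_eq_prod_automorphisms]
    exact Fintype.prod_equiv (Equiv.mulRight g) _ _
      (fun τ => (AlgEquiv.mul_apply _ _ _).symm)
  have hNormL : ∀ z : ↥L, Algebra.norm ℚ_[3] ((algebraMap ↥L M) z)
      = (Algebra.norm ℚ_[3] z) ^ 3 := by
    intro z
    rw [← Algebra.norm_norm (R := ℚ_[3]) (S := ↥L), Algebra.norm_algebraMap, hLM3, map_pow]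
  set A0 : ℚ_[3] := Algebra.norm ℚ_[3] aL with hA0
  set T0 : ℚ_[3] := Algebra.norm ℚ_[3] tL with hT0
  have hA00 : A0 ≠ 0 := by
    rw [hA0, Algebra.norm_ne_zero_iff]
    exact haL0
  have hT00 : T0 ≠ 0 := by
    rw [hT0, Algebra.norm_ne_zero_iff]
    exact htL0
  have hNaM : Algebra.norm ℚ_[3] aM = A0 ^ 3 := by
    rw [haM, hNormL]
  have hNt : Algebra.norm ℚ_[3] t = T0 ^ 3 := by
    have : t = algebraMap ↥L M tL := rfl
    rw [this, hNormL]
  have hkey : A0 ^ 6 = T0 ^ 9 := by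
    have h2 := congrArg (Algebra.norm ℚ_[3]) haσa
    rw [map_mul, hNormAut, hNaM, map_pow, hNt] at h2
    linear_combination h2
  -- 3 divides the valuation of A0
  have hval : 6 * A0.valuation = 9 * T0.valuation := by
    have h2 : (A0 ^ 6).valuation = (T0 ^ 9).valuation := by rw [hkey]
    rw [padic_val_pow hA00, padic_val_pow hT00] at h2
    push_cast at h2
    omega
  obtain ⟨k, hk⟩ : ∃ k : ℤ, A0.valuation = 3 * k := by
    refine ⟨A0.valuation / 3, ?_⟩
    omega
  -- the uniformizer π = ω - ω²
  set πM : M := ω - ω ^ 2 with hπ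
  have hπ2 : πM ^ 2 = algebraMap ℚ_[3] M (-3) := by
    have hm3 : algebraMap ℚ_[3] M (-3) = -3 := by
      rw [map_neg, map_ofNat]
    rw [hπ, hm3]
    linear_combination (ω - 2) * hω3 + hω
  have hπmem : πM ∈ L := by
    rw [hπ]
    exact sub_mem hωmem (pow_mem hωmem 2)
  have hπ0 : πM ≠ 0 := by
    intro h
    rw [h, zero_pow (by norm_num : (2:ℕ) ≠ 0)] at hπ2
    have h3 : (-3 : ℚ_[3]) = 0 :=
      (map_eq_zero_iff _ (algebraMap ℚ_[3] M).injective).mp hπ2.symm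
    norm_num at h3
  set πL : ↥L := ⟨πM, hπmem⟩ with hπL
  have hπL2 : πL ^ 2 = algebraMap ℚ_[3] ↥L (-3) := by
    have h5 : algebraMap ↥L M (πL ^ 2) = algebraMap ↥L M (algebraMap ℚ_[3] ↥L (-3)) := by
      rw [map_pow, ← IsScalarTower.algebraMap_apply]
      exact hπ2
    exact (algebraMap ↥L M).injective h5
  set P0 : ℚ_[3] := Algebra.norm ℚ_[3] πL with hP0
  have hπL0 : πL ≠ 0 := by
    intro h
    apply hπ0
    have := congrArg (fun z : ↥L => (z : M)) h
    simpa [hπL] using this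
  have hP00 : P0 ≠ 0 := by
    rw [hP0, Algebra.norm_ne_zero_iff]
    exact hπL0
  have hP0sq : P0 ^ 2 = 9 := by
    rw [hP0, ← map_pow, hπL2, Algebra.norm_algebraMap, hL2]
    norm_num
  have hvP : P0.valuation = 1 := by
    have h2 : (P0 ^ 2).valuation = ((9 : ℚ_[3])).valuation := by rw [hP0sq]
    have h9 : (9 : ℚ_[3]) = 3 ^ 2 := by norm_num
    rw [padic_val_pow hP00, h9, padic_val_pow (by norm_num : (3:ℚ_[3]) ≠ 0), val_three] at h2
    push_cast at h2
    omega
  have hNπ : Algebra.norm ℚ_[3] πM = P0 ^ 3 := by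
    have : πM = algebraMap ↥L M πL := rfl
    rw [this, hNormL]
  have hNπ0 : Algebra.norm ℚ_[3] πM ≠ 0 := by
    rw [hNπ]
    exact pow_ne_zero _ hP00
  -- the unit α and the new generator x'
  set k₁ : ℕ := k.toNat with hk₁
  set k₂ : ℕ := (-k).toNat with hk₂
  have hk12 : (k₁ : ℤ) - k₂ = k := by omega
  set α : M := aM * πM ^ (3 * k₂) * (πM ^ (3 * k₁))⁻¹ with hα
  set x' : M := x * πM ^ k₂ * (πM ^ k₁)⁻¹ with hx'
  have hα0 : α ≠ 0 := by
    rw [hα]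
    exact mul_ne_zero (mul_ne_zero haM0 (pow_ne_zero _ hπ0))
      (inv_ne_zero (pow_ne_zero _ hπ0))
  have hx'3 : x' ^ 3 = α := by
    rw [hx', hα]
    field_simp
    rw [← haMx]
    ring
  have hαmem : α ∈ L := by
    rw [hα]
    exact mul_mem (mul_mem haMmem (pow_mem hπmem _)) (inv_mem (pow_mem hπmem _))
  -- valuation of the norm of α is zero
  have hαred : α * πM ^ (3 * k₁) = aM * πM ^ (3 * k₂) := by
    rw [hα]
    field_simp
  have hxeq : x = x' * πM ^ k₁ * (πM ^ k₂)⁻¹ := by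
    rw [hx']
    field_simp
  clear_value α x'
  have hNα0 : Algebra.norm ℚ_[3] α ≠ 0 := by
    rw [Algebra.norm_ne_zero_iff]
    exact hα0
  have hvNα : (Algebra.norm ℚ_[3] α).valuation = 0 := by
    have h2 : Algebra.norm ℚ_[3] α * (Algebra.norm ℚ_[3] πM) ^ (3 * k₁)
        = A0 ^ 3 * (Algebra.norm ℚ_[3] πM) ^ (3 * k₂) := by
      rw [← hNaM, ← map_pow, ← map_pow, ← map_mul, ← map_mul, hαred]
    rw [hNπ] at h2
    have h3 := congrArg Padic.valuation h2
    rw [Padic.valuation_mul hNα0 (pow_ne_zero _ (pow_ne_zero _ hP00)),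
      Padic.valuation_mul (pow_ne_zero _ hA00) (pow_ne_zero _ (pow_ne_zero _ hP00)),
      padic_val_pow (pow_ne_zero _ hP00), padic_val_pow hP00,
      padic_val_pow (pow_ne_zero _ hP00), padic_val_pow hP00,
      padic_val_pow hA00, hvP, hk] at h3
    push_cast at h3
    omega
  -- the coefficients of the quadratic satisfied by α
  have hσ2α : (σ ^ 2) α = α := hfixL α hαmem
  have hσσα : σ (σ α) = α := by
    have : σ (σ α) = (σ ^ 2) α := by
      rw [pow_two, AlgEquiv.mul_apply]
    rw [this, hσ2α]
  have hσα0 : σ α ≠ 0 := fun h => hα0 (by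
    have := congrArg σ.symm h
    simpa using this)
  obtain ⟨b, hb⟩ : ∃ r : ℚ_[3], algebraMap ℚ_[3] M r = α + σ α := by
    apply hfixQ
    rw [map_add, hσσα]
    ring
  obtain ⟨c, hc⟩ : ∃ r : ℚ_[3], algebraMap ℚ_[3] M r = α * σ α := by
    apply hfixQ
    rw [map_mul, hσσα]
    ring
  have hαroot : α ^ 2 - algebraMap ℚ_[3] M b * α + algebraMap ℚ_[3] M c = 0 := by
    linear_combination (-α) * hb + hc
  have hc0 : c ≠ 0 := by
    intro h
    rw [h, map_zero] at hc
    exact (mul_ne_zero hα0 hσα0) hc.symm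
  -- valuation of c is zero
  have hvc : c.valuation = 0 := by
    have h3 : Algebra.norm ℚ_[3] (α * σ α) = (Algebra.norm ℚ_[3] α) ^ 2 := by
      rw [map_mul, hNormAut]
      ring
    have h4 : c ^ 6 = (Algebra.norm ℚ_[3] α) ^ 2 := by
      have h4 := congrArg (Algebra.norm ℚ_[3]) hc
      rwa [Algebra.norm_algebraMap, hdeg, h3] at h4
    have h6 := congrArg Padic.valuation h4
    rw [padic_val_pow hc0, padic_val_pow hNα0, hvNα] at h6
    push_cast at h6
    omega
  have hcnorm : ‖c‖ = 1 := by
    rw [Padic.norm_eq_zpow_neg_valuation hc0, hvc]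
    norm_num
  -- norm of b is at most 1
  have hbnorm : ‖b‖ ≤ 1 := by
    by_contra hgt
    push_neg at hgt
    have hb0 : b ≠ 0 := by
      intro h
      rw [h] at hgt
      norm_num at hgt
    set u' : ℚ_[3] := -(4 * c) / b ^ 2 with hu'
    have hu'norm : ‖u'‖ < 1 := by
      rw [hu', norm_div, norm_neg, norm_mul, norm_four_eq, hcnorm, norm_pow]
      rw [div_lt_one (by positivity)]
      nlinarith
    obtain ⟨s, hs⟩ := sqrt_one_add hu'norm
    have hs' : b ^ 2 * s ^ 2 = b ^ 2 - 4 * c := by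
      have hbb : b ^ 2 ≠ 0 := pow_ne_zero _ hb0
      have := congrArg (fun z => b ^ 2 * z) hs
      rw [this, hu']
      field_simp
      ring
    set r : ℚ_[3] := b * (1 - s) / 2 with hr
    have hroot : r ^ 2 - b * r + c = 0 := by
      rw [hr]
      linear_combination ((1:ℚ_[3])/4) * hs'
    -- α is rational
    have hrootM : (algebraMap ℚ_[3] M r) ^ 2 - algebraMap ℚ_[3] M b * algebraMap ℚ_[3] M r
        + algebraMap ℚ_[3] M c = 0 := by
      have := congrArg (algebraMap ℚ_[3] M) hroot
      rw [map_add, map_sub, map_pow, map_mul, map_zero] at this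
      exact this
    have hfact : (α - algebraMap ℚ_[3] M r) *
        (α - (algebraMap ℚ_[3] M b - algebraMap ℚ_[3] M r)) = 0 := by
      linear_combination hαroot - hrootM
    obtain ⟨r0, hr0⟩ : ∃ r0 : ℚ_[3], algebraMap ℚ_[3] M r0 = α := by
      rcases mul_eq_zero.mp hfact with h | h
      · exact ⟨r, by linear_combination -h⟩
      · exact ⟨b - r, by rw [map_sub]; linear_combination -h⟩
    have hσα : σ α = α := by
      rw [← hr0, AlgEquiv.commutes]
    have hcr : c = r0 ^ 2 := by
      apply (algebraMap ℚ_[3] M).injective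
      rw [hc, hσα, ← hr0, map_pow]
      ring
    have hr00 : r0 ≠ 0 := by
      intro h
      rw [h] at hcr
      simp at hcr
      exact hc0 hcr
    have hvr0 : r0.valuation = 0 := by
      have := congrArg Padic.valuation hcr
      rw [padic_val_pow hr00, hvc] at this
      push_cast at this
      omega
    have hbr : b = 2 * r0 := by
      apply (algebraMap ℚ_[3] M).injective
      rw [hb, hσα, ← hr0, map_mul, map_ofNat]
      ring
    have : ‖b‖ = 1 := by
      rw [hbr, norm_mul, norm_two_eq, Padic.norm_eq_zpow_neg_valuation hr00, hvr0]
      norm_num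
    rw [this] at hgt
    norm_num at hgt
  -- integrality of α
  have hint : IsIntegral ℤ_[3] α := by
    set b₀ : ℤ_[3] := ⟨b, hbnorm⟩ with hb₀
    set c₀ : ℤ_[3] := ⟨c, le_of_eq hcnorm⟩ with hc₀
    refine ⟨X ^ 2 + (C (-b₀) * X + C c₀), ?_, ?_⟩
    · apply Polynomial.monic_X_pow_add
      exact lt_of_le_of_lt Polynomial.degree_linear_le (by decide)
    · rw [eval₂_add, eval₂_add, eval₂_pow, eval₂_X, eval₂_mul, eval₂_C, eval₂_C, eval₂_X]
      have hbM : algebraMap ℤ_[3] M b₀ = algebraMap ℚ_[3] M b := by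
        rw [IsScalarTower.algebraMap_apply ℤ_[3] ℚ_[3] M]
        congr 1
      have hcM : algebraMap ℤ_[3] M c₀ = algebraMap ℚ_[3] M c := by
        rw [IsScalarTower.algebraMap_apply ℤ_[3] ℚ_[3] M]
        congr 1
      rw [map_neg, hbM, hcM]
      linear_combination hαroot
  have hintinv : IsIntegral ℤ_[3] α⁻¹ := by
    have hb1 : ‖b / c‖ ≤ 1 := by
      rw [norm_div, hcnorm, div_one]
      exact hbnorm
    have hc1 : ‖c⁻¹‖ ≤ 1 := by
      rw [norm_inv, hcnorm]
      norm_num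
    set b₁ : ℤ_[3] := ⟨b / c, hb1⟩ with hb₁
    set c₁ : ℤ_[3] := ⟨c⁻¹, hc1⟩ with hc₁
    refine ⟨X ^ 2 + (C (-b₁) * X + C c₁), ?_, ?_⟩
    · apply Polynomial.monic_X_pow_add
      exact lt_of_le_of_lt Polynomial.degree_linear_le (by decide)
    · rw [eval₂_add, eval₂_add, eval₂_pow, eval₂_X, eval₂_mul, eval₂_C, eval₂_C, eval₂_X]
      have hbM : algebraMap ℤ_[3] M b₁ = algebraMap ℚ_[3] M (b / c) := by
        rw [IsScalarTower.algebraMap_apply ℤ_[3] ℚ_[3] M]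
        congr 1
      have hcM : algebraMap ℤ_[3] M c₁ = algebraMap ℚ_[3] M c⁻¹ := by
        rw [IsScalarTower.algebraMap_apply ℤ_[3] ℚ_[3] M]
        congr 1
      rw [map_neg, hbM, hcM, map_div₀, map_inv₀]
      have hcM0 : algebraMap ℚ_[3] M c ≠ 0 := by
        rw [map_ne_zero_iff _ (algebraMap ℚ_[3] M).injective]
        exact hc0
      field_simp [hcM0]
      linear_combination hαroot
  -- the adjoined field is still everything
  have hadj2 : IntermediateField.adjoin ℚ_[3] {ω, x'} = ⊤ := by
    apply le_antisymm le_top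
    rw [← h1', IntermediateField.adjoin_le_iff]
    have hωadj : ω ∈ IntermediateField.adjoin ℚ_[3] {ω, x'} :=
      IntermediateField.subset_adjoin _ _ (by simp)
    have hx'adj : x' ∈ IntermediateField.adjoin ℚ_[3] {ω, x'} :=
      IntermediateField.subset_adjoin _ _ (by simp)
    have hπadj : πM ∈ IntermediateField.adjoin ℚ_[3] {ω, x'} := by
      rw [hπ]
      exact sub_mem hωadj (pow_mem hωadj 2)
    have hxadj2 : x ∈ IntermediateField.adjoin ℚ_[3] {ω, x'} := by
      rw [hxeq]
      exact mul_mem (mul_mem hx'adj (pow_mem hπadj _)) (inv_mem (pow_mem hπadj _))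
    rintro z (rfl | rfl)
    · exact hωadj
    · exact hxadj2
  exact ⟨α, x', hαmem, hint, hα0, hintinv, hx'3, hadj2⟩
end

section
/- Let M be a field extension of ℚ₃ of degree 6 that is Galois over ℚ₃ with cyclic Galois group, and suppose M contains an element ω with ω² + ω + 1 = 0 (a primitive cube root of unity). Let 𝒪_M be the ring of integers of M and let χ: 𝒪_M^× → M^× be a group homomorphism such that χ(u)⁶ = 1 for all u ∈ 𝒪_M^×, and χ(τ(u)) = τ(χ(u)) for every τ ∈ Gal(M/ℚ₃) and every u ∈ 𝒪_M^×. Then χ(ω) = 1. -/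
open Module Filter

section Nu
variable (M : Type*) [Field M] [Algebra ℚ_[3] M] [FiniteDimensional ℚ_[3] M]

noncomputable def nuAux : M → ℝ := fun z => ‖(Module.finBasis ℚ_[3] M).equivFun z‖

variable {M}

lemma nuAux_nonneg (z : M) : 0 ≤ nuAux M z := norm_nonneg _

lemma nuAux_eq_zero_iff (z : M) : nuAux M z = 0 ↔ z = 0 := by
  unfold nuAux
  rw [norm_eq_zero]
  constructor
  · intro h
    have := congrArg (Module.finBasis ℚ_[3] M).equivFun.symm h
    rwa [LinearEquiv.symm_apply_apply, map_zero] at this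
  · rintro rfl; simp

lemma nuAux_add_le (z w : M) : nuAux M (z + w) ≤ nuAux M z + nuAux M w := by
  unfold nuAux; rw [map_add]; exact norm_add_le _ _

lemma nuAux_smul (c : ℚ_[3]) (z : M) : nuAux M (c • z) = ‖c‖ * nuAux M z := by
  unfold nuAux; rw [map_smul, norm_smul]

lemma nuAux_neg (z : M) : nuAux M (-z) = nuAux M z := by
  have := nuAux_smul (-1 : ℚ_[3]) z
  simpa using this

lemma nuAux_sub_le (z w : M) : nuAux M (z - w) ≤ nuAux M z + nuAux M w := by
  rw [sub_eq_add_neg]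
  simpa [nuAux_neg] using nuAux_add_le z (-w)

lemma nuAux_pos {z : M} (hz : z ≠ 0) : 0 < nuAux M z :=
  lt_of_le_of_ne (nuAux_nonneg z) (fun h => hz ((nuAux_eq_zero_iff z).mp h.symm))

lemma nuAux_sum_le {ι : Type*} (s : Finset ι) (f : ι → M) :
    nuAux M (∑ i ∈ s, f i) ≤ ∑ i ∈ s, nuAux M (f i) := by
  unfold nuAux
  rw [map_sum]
  exact norm_sum_le _ _

/-- multiplicative bound -/
lemma nuAux_mul_bound : ∃ C : ℝ, 1 ≤ C ∧ ∀ z w : M, nuAux M (z * w) ≤ C * nuAux M z * nuAux M w := by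
  classical
  set b := Module.finBasis ℚ_[3] M with hb
  set e := b.equivFun with he
  have hcoord : ∀ (z : M) i, ‖e z i‖ ≤ nuAux M z := fun z i => norm_le_pi_norm (e z) i
  set C : ℝ := 1 + ∑ i, ∑ j, nuAux M (b i * b j) with hC
  have hCpos : 1 ≤ C := by
    have : (0:ℝ) ≤ ∑ i, ∑ j, nuAux M (b i * b j) :=
      Finset.sum_nonneg fun i _ => Finset.sum_nonneg fun j _ => nuAux_nonneg _
    linarith
  refine ⟨C, hCpos, fun z w => ?_⟩
  have key : ∀ v : M, nuAux M (v * w) ≤ nuAux M w * ∑ j, nuAux M (v * b j) := by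
    intro v
    have hw : v * w = ∑ j, e w j • (v * b j) := by
      conv_lhs => rw [← b.sum_equivFun w]
      rw [Finset.mul_sum]
      congr 1; ext j; rw [mul_smul_comm]
    rw [hw]
    calc nuAux M (∑ j, e w j • (v * b j)) ≤ ∑ j, nuAux M (e w j • (v * b j)) :=
          nuAux_sum_le _ _
      _ = ∑ j, ‖e w j‖ * nuAux M (v * b j) := by simp [nuAux_smul]
      _ ≤ ∑ j, nuAux M w * nuAux M (v * b j) := by
          apply Finset.sum_le_sum
          intro j _
          exact mul_le_mul_of_nonneg_right (hcoord w j) (nuAux_nonneg _)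
      _ = nuAux M w * ∑ j, nuAux M (v * b j) := by rw [Finset.mul_sum]
  have hz : z * w = ∑ i, e z i • (b i * w) := by
    conv_lhs => rw [← b.sum_equivFun z]
    rw [Finset.sum_mul]
    congr 1; ext i; rw [smul_mul_assoc]
  rw [hz]
  calc nuAux M (∑ i, e z i • (b i * w)) ≤ ∑ i, nuAux M (e z i • (b i * w)) := nuAux_sum_le _ _
    _ = ∑ i, ‖e z i‖ * nuAux M (b i * w) := by simp [nuAux_smul]
    _ ≤ ∑ i, nuAux M z * (nuAux M w * ∑ j, nuAux M (b i * b j)) := by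
        apply Finset.sum_le_sum
        intro i _
        exact mul_le_mul (hcoord z i) (key (b i)) (nuAux_nonneg _)
          (le_trans (nuAux_nonneg z) (le_refl _))
    _ = (∑ i, ∑ j, nuAux M (b i * b j)) * nuAux M z * nuAux M w := by
        rw [Finset.sum_mul, Finset.sum_mul]
        congr 1; funext i
        rw [Finset.sum_mul, Finset.sum_mul, Finset.mul_sum, Finset.mul_sum]
        congr 1; funext j; ring
    _ ≤ C * nuAux M z * nuAux M w := by
        apply mul_le_mul_of_nonneg_right _ (nuAux_nonneg w)
        apply mul_le_mul_of_nonneg_right _ (nuAux_nonneg z)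
        rw [hC]; linarith

end Nu
section Nu2
variable {M : Type*} [Field M] [Algebra ℚ_[3] M] [FiniteDimensional ℚ_[3] M]

lemma norm_three_zpow (m : ℤ) : ‖(3:ℚ_[3])^m‖ = (3:ℝ)^(-m) := by
  have h3 : ‖(3:ℚ_[3])‖ = (3:ℝ)⁻¹ := by
    have := @Padic.norm_p 3 ⟨by norm_num⟩
    simpa using this
  rw [norm_zpow, h3, inv_zpow, ← zpow_neg]

lemma nuAux_scale (z : M) (hz : z ≠ 0) :
    ∃ c : ℚ_[3], c ≠ 0 ∧ (3:ℝ)⁻¹ < nuAux M (c • z) ∧ nuAux M (c • z) ≤ 1 ∧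
      ‖c‖ ≤ (nuAux M z)⁻¹ := by
  have hνpos : 0 < nuAux M z := nuAux_pos hz
  obtain ⟨n, hn1, hn2⟩ := exists_mem_Ioc_zpow hνpos (by norm_num : (1:ℝ) < 3)
  refine ⟨(3:ℚ_[3])^(n+1), ?_, ?_, ?_, ?_⟩
  · exact zpow_ne_zero _ (by norm_num)
  · rw [nuAux_smul, norm_three_zpow]
    have h1 : (3:ℝ)^(-(n+1)) * (3:ℝ)^n = (3:ℝ)⁻¹ := by
      rw [← zpow_add₀ (by norm_num : (3:ℝ) ≠ 0)]
      have : -(n+1) + n = -1 := by ring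
      rw [this, zpow_neg_one]
    calc (3:ℝ)⁻¹ = (3:ℝ)^(-(n+1)) * (3:ℝ)^n := h1.symm
      _ < (3:ℝ)^(-(n+1)) * nuAux M z := by
          apply mul_lt_mul_of_pos_left hn1 (by positivity)
  · rw [nuAux_smul, norm_three_zpow]
    have h1 : (3:ℝ)^(-(n+1)) * (3:ℝ)^(n+1) = 1 := by
      rw [← zpow_add₀ (by norm_num : (3:ℝ) ≠ 0)]
      have : -(n+1) + (n+1) = 0 := by ring
      rw [this, zpow_zero]
    calc (3:ℝ)^(-(n+1)) * nuAux M z ≤ (3:ℝ)^(-(n+1)) * (3:ℝ)^(n+1) := by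
          apply mul_le_mul_of_nonneg_left hn2 (by positivity)
      _ = 1 := h1
  · rw [norm_three_zpow]
    rw [le_inv_comm₀ (by positivity) hνpos]
    rw [← zpow_neg]
    simpa using hn2

/-- the key compactness bound: inversion is bounded on the unit annulus -/
lemma nuAux_inv_bound :
    ∃ B : ℝ, 0 < B ∧ ∀ z : M, z ≠ 0 → (3:ℝ)⁻¹ < nuAux M z → nuAux M z ≤ 1 →
      nuAux M z⁻¹ ≤ B := by
  classical
  by_contra hcon
  push_neg at hcon
  obtain ⟨C, hC1, hCmul⟩ := nuAux_mul_bound (M := M)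
  have hseq : ∀ j : ℕ, ∃ z : M, z ≠ 0 ∧ (3:ℝ)⁻¹ < nuAux M z ∧ nuAux M z ≤ 1 ∧
      ((j:ℝ)+1) < nuAux M z⁻¹ := by
    intro j
    obtain ⟨z, hz, h1, h2, h3⟩ := hcon ((j:ℝ)+1) (by positivity)
    exact ⟨z, hz, h1, h2, h3⟩
  choose ζ hζ0 hζlo hζhi hζinv using hseq
  choose c hc0 hηlo hηhi hcnorm using fun j => nuAux_scale ((ζ j)⁻¹) (inv_ne_zero (hζ0 j))
  set η : ℕ → M := fun j => c j • (ζ j)⁻¹ with hη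
  set e := (Module.finBasis ℚ_[3] M).equivFun with he
  have hmemζ : ∀ j, e (ζ j) ∈ Metric.closedBall (0 : Fin (Module.finrank ℚ_[3] M) → ℚ_[3]) 1 := by
    intro j; rw [Metric.mem_closedBall, dist_zero_right]; exact hζhi j
  obtain ⟨Fs, hFsmem, φ, hφ, hFtend⟩ :=
    (isCompact_closedBall (0 : Fin (Module.finrank ℚ_[3] M) → ℚ_[3]) 1).tendsto_subseq hmemζ
  have hmemη : ∀ k, e (η (φ k)) ∈ Metric.closedBall (0 : Fin (Module.finrank ℚ_[3] M) → ℚ_[3]) 1 := by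
    intro k; rw [Metric.mem_closedBall, dist_zero_right]; exact hηhi (φ k)
  obtain ⟨Gs, hGsmem, ψ, hψ, hGtend⟩ :=
    (isCompact_closedBall (0 : Fin (Module.finrank ℚ_[3] M) → ℚ_[3]) 1).tendsto_subseq hmemη
  set J : ℕ → ℕ := fun k => φ (ψ k) with hJ
  have hFtend2 : Filter.Tendsto (fun k => e (ζ (J k))) Filter.atTop (nhds Fs) := by
    have := hFtend.comp (hψ.tendsto_atTop)
    exact this
  have hGtend2 : Filter.Tendsto (fun k => e (η (J k))) Filter.atTop (nhds Gs) := hGtend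
  set ζs : M := e.symm Fs with hζs
  set ηs : M := e.symm Gs with hηs
  have heζs : e ζs = Fs := by rw [hζs]; exact (Module.finBasis ℚ_[3] M).equivFun.apply_symm_apply Fs
  have heηs : e ηs = Gs := by rw [hηs]; exact (Module.finBasis ℚ_[3] M).equivFun.apply_symm_apply Gs
  -- distance facts
  have hd1 : Filter.Tendsto (fun k => nuAux M (ζ (J k) - ζs)) Filter.atTop (nhds 0) := by
    have h := (hFtend2.sub (tendsto_const_nhds (x := Fs))).norm
    simp only [sub_self, norm_zero] at h
    convert h using 2 with k
    show ‖e _‖ = _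
    rw [map_sub, heζs]
  have hd2 : Filter.Tendsto (fun k => nuAux M (η (J k) - ηs)) Filter.atTop (nhds 0) := by
    have h := (hGtend2.sub (tendsto_const_nhds (x := Gs))).norm
    simp only [sub_self, norm_zero] at h
    convert h using 2 with k
    show ‖e _‖ = _
    rw [map_sub, heηs]
  -- limits are nonzero
  have hζs0 : ζs ≠ 0 := by
    have hlim : Filter.Tendsto (fun k => nuAux M (ζ (J k))) Filter.atTop (nhds (nuAux M ζs)) := by
      have h := hFtend2.norm
      have : ‖Fs‖ = nuAux M ζs := by rw [← heζs]; rfl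
      rw [this] at h; exact h
    have hge : (3:ℝ)⁻¹ ≤ nuAux M ζs :=
      ge_of_tendsto hlim (Filter.Eventually.of_forall (fun k => le_of_lt (hζlo (J k))))
    intro h0
    rw [h0, (nuAux_eq_zero_iff (0:M)).mpr rfl] at hge
    norm_num at hge
  have hηs0 : ηs ≠ 0 := by
    have hlim : Filter.Tendsto (fun k => nuAux M (η (J k))) Filter.atTop (nhds (nuAux M ηs)) := by
      have h := hGtend2.norm
      have : ‖Gs‖ = nuAux M ηs := by rw [← heηs]; rfl
      rw [this] at h; exact h
    have hge : (3:ℝ)⁻¹ ≤ nuAux M ηs :=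
      ge_of_tendsto hlim (Filter.Eventually.of_forall (fun k => le_of_lt (hηlo (J k))))
    intro h0
    rw [h0, (nuAux_eq_zero_iff (0:M)).mpr rfl] at hge
    norm_num at hge
  -- products are small
  have hprod : ∀ j, nuAux M (ζ j * η j) ≤ nuAux M 1 / ((j:ℝ)+1) := by
    intro j
    have : ζ j * η j = c j • (1 : M) := by
      rw [hη]
      rw [mul_smul_comm, mul_inv_cancel₀ (hζ0 j)]
    rw [this, nuAux_smul]
    calc ‖c j‖ * nuAux M 1 ≤ (nuAux M (ζ j)⁻¹)⁻¹ * nuAux M 1 :=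
          mul_le_mul_of_nonneg_right (hcnorm j) (nuAux_nonneg _)
      _ ≤ ((j:ℝ)+1)⁻¹ * nuAux M 1 := by
          apply mul_le_mul_of_nonneg_right _ (nuAux_nonneg _)
          have h1 : (0:ℝ) < (j:ℝ)+1 := by positivity
          have h2 : ((j:ℝ)+1) ≤ nuAux M (ζ j)⁻¹ := le_of_lt (hζinv j)
          have h3 : (0:ℝ) < nuAux M (ζ j)⁻¹ := lt_of_lt_of_le h1 h2
          rw [inv_le_inv₀ h3 h1]
          exact h2
      _ = nuAux M 1 / ((j:ℝ)+1) := by ring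
  -- conclude
  have hmain : ∀ k : ℕ, nuAux M (ζs * ηs) ≤
      C * nuAux M (ζ (J k) - ζs) + C * nuAux M (η (J k) - ηs) + nuAux M 1 / ((k:ℝ)+1) := by
    intro k
    have hsplit : ζs * ηs = (ζs - ζ (J k)) * ηs + ζ (J k) * (ηs - η (J k)) + ζ (J k) * η (J k) := by
      ring
    rw [hsplit]
    have hνηs : nuAux M ηs ≤ 1 := by
      have : ‖Gs‖ ≤ 1 := by rwa [Metric.mem_closedBall, dist_zero_right] at hGsmem
      calc nuAux M ηs = ‖Gs‖ := by rw [← heηs]; rfl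
        _ ≤ 1 := this
    have hνζJ : nuAux M (ζ (J k)) ≤ 1 := hζhi (J k)
    calc nuAux M ((ζs - ζ (J k)) * ηs + ζ (J k) * (ηs - η (J k)) + ζ (J k) * η (J k))
        ≤ nuAux M ((ζs - ζ (J k)) * ηs + ζ (J k) * (ηs - η (J k))) + nuAux M (ζ (J k) * η (J k)) :=
          nuAux_add_le _ _
      _ ≤ (nuAux M ((ζs - ζ (J k)) * ηs) + nuAux M (ζ (J k) * (ηs - η (J k)))) +
            nuAux M (ζ (J k) * η (J k)) := by
          apply add_le_add_left (nuAux_add_le _ _)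
      _ ≤ (C * nuAux M (ζs - ζ (J k)) * nuAux M ηs + C * nuAux M (ζ (J k)) * nuAux M (ηs - η (J k))) +
            nuAux M (ζ (J k) * η (J k)) := by
          apply add_le_add_left (add_le_add (hCmul _ _) (hCmul _ _))
      _ ≤ C * nuAux M (ζ (J k) - ζs) + C * nuAux M (η (J k) - ηs) + nuAux M 1 / ((k:ℝ)+1) := by
          have hC0 : (0:ℝ) ≤ C := by linarith
          have e1 : ζs - ζ (J k) = -(ζ (J k) - ζs) := by ring
          have e2 : ηs - η (J k) = -(η (J k) - ηs) := by ring
          rw [e1, e2, nuAux_neg, nuAux_neg]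
          have t1 : C * nuAux M (ζ (J k) - ζs) * nuAux M ηs ≤ C * nuAux M (ζ (J k) - ζs) * 1 :=
            mul_le_mul_of_nonneg_left hνηs (mul_nonneg hC0 (nuAux_nonneg _))
          have t2 : C * nuAux M (ζ (J k)) * nuAux M (η (J k) - ηs) ≤
              C * 1 * nuAux M (η (J k) - ηs) :=
            mul_le_mul_of_nonneg_right (mul_le_mul_of_nonneg_left hνζJ hC0) (nuAux_nonneg _)
          have t3 := hprod (J k)
          have hJk : (k:ℝ) ≤ (J k : ℝ) := by
            have h1 : k ≤ J k := le_trans (StrictMono.le_apply hψ) (StrictMono.le_apply hφ)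
            exact_mod_cast h1
          have e3 : nuAux M 1 / ((J k:ℝ)+1) ≤ nuAux M 1 / ((k:ℝ)+1) := by
            apply div_le_div_of_nonneg_left (nuAux_nonneg _) (by positivity) (by linarith)
          nlinarith [nuAux_nonneg (M:=M) (ζ (J k) - ζs), nuAux_nonneg (M:=M) (η (J k) - ηs)]
  have htend : Filter.Tendsto (fun k : ℕ =>
      C * nuAux M (ζ (J k) - ζs) + C * nuAux M (η (J k) - ηs) + nuAux M 1 / ((k:ℝ)+1))
      Filter.atTop (nhds 0) := by
    have t1 := hd1.const_mul C
    have t2 := hd2.const_mul C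
    have t3 : Filter.Tendsto (fun k : ℕ => nuAux M 1 / ((k:ℝ)+1)) Filter.atTop (nhds 0) := by
      have := (tendsto_const_div_atTop_nhds_zero_nat (nuAux M 1)).comp
        (Filter.tendsto_add_atTop_nat 1)
      convert this using 2 with k
      simp only [Function.comp]
      push_cast
      ring
    have := (t1.add t2).add t3
    simpa using this
  have hfin : nuAux M (ζs * ηs) ≤ 0 :=
    ge_of_tendsto htend (Filter.Eventually.of_forall hmain)
  have : ζs * ηs = 0 := by
    rw [← nuAux_eq_zero_iff]
    exact le_antisymm hfin (nuAux_nonneg _)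
  rcases mul_eq_zero.mp this with h | h
  · exact hζs0 h
  · exact hηs0 h

end Nu2
section Nu3
variable {M : Type*} [Field M] [Algebra ℚ_[3] M] [FiniteDimensional ℚ_[3] M]

/-- C4 : multiplicative control of the inverse -/
lemma nuAux_inv_le : ∃ B : ℝ, 0 < B ∧ ∀ z : M, z ≠ 0 → nuAux M z⁻¹ ≤ B / nuAux M z := by
  obtain ⟨B, hB, hBall⟩ := nuAux_inv_bound (M := M)
  refine ⟨B, hB, fun z hz => ?_⟩
  obtain ⟨c, hc0, hlo, hhi, hcn⟩ := nuAux_scale z hz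
  have hζ0 : c • z ≠ 0 := smul_ne_zero hc0 hz
  have h1 : nuAux M (c • z)⁻¹ ≤ B := hBall _ hζ0 hlo hhi
  have h2 : (c • z)⁻¹ = c⁻¹ • z⁻¹ := by
    rw [Algebra.smul_def, Algebra.smul_def, mul_inv, map_inv₀]
  have h3 : z⁻¹ = c • (c • z)⁻¹ := by
    rw [h2, smul_smul, mul_inv_cancel₀ hc0, one_smul]
  rw [h3, nuAux_smul]
  have hνz : 0 < nuAux M z := nuAux_pos hz
  calc ‖c‖ * nuAux M (c • z)⁻¹ ≤ (nuAux M z)⁻¹ * B := by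
        apply mul_le_mul hcn h1 (nuAux_nonneg _) (by positivity)
    _ = B / nuAux M z := by ring

variable [Algebra ℤ_[3] M] [IsScalarTower ℤ_[3] ℚ_[3] M]

/-- power-bounded implies integral -/
lemma integral_of_powerBounded (z : M) (D : ℝ) (hD : ∀ k : ℕ, nuAux M (z ^ k) ≤ D) :
    IsIntegral ℤ_[3] z := by
  classical
  set b := Module.finBasis ℚ_[3] M with hb
  set e := b.equivFun with he
  obtain ⟨t, ht⟩ := pow_unbounded_of_one_lt D (by norm_num : (1:ℝ) < 3)
  -- lattice generators
  set g : Fin (Module.finrank ℚ_[3] M) → M := fun i => ((3:ℚ_[3])^t)⁻¹ • b i with hg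
  set N : Submodule ℤ_[3] M := Submodule.span ℤ_[3] (Set.range g) with hN
  have hNfg : N.FG := Submodule.fg_span (Set.finite_range g)
  have h3t : ((3:ℚ_[3])^t) ≠ 0 := pow_ne_zero _ (by norm_num)
  have hnorm3t : ‖(3:ℚ_[3])^t‖ = ((3:ℝ)^t)⁻¹ := by
    rw [norm_pow]
    have h3 : ‖(3:ℚ_[3])‖ = (3:ℝ)⁻¹ := by
      have := @Padic.norm_p 3 ⟨by norm_num⟩
      simpa using this
    rw [h3, inv_pow]
  -- membership of bounded elements
  have hmem : ∀ w : M, nuAux M w ≤ D → w ∈ N := by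
    intro w hw
    have hrepr : w = ∑ i, e w i • b i := (b.sum_equivFun w).symm
    have hcoef : ∀ i, ‖(3:ℚ_[3])^t * e w i‖ ≤ 1 := by
      intro i
      rw [norm_mul, hnorm3t]
      have hci : ‖e w i‖ ≤ D := le_trans (norm_le_pi_norm (e w) i) hw
      have h3tpos : (0:ℝ) < 3^t := by positivity
      calc ((3:ℝ)^t)⁻¹ * ‖e w i‖ ≤ ((3:ℝ)^t)⁻¹ * (3:ℝ)^t := by
            apply mul_le_mul_of_nonneg_left (le_trans hci (le_of_lt ht)) (by positivity)
        _ = 1 := inv_mul_cancel₀ (ne_of_gt h3tpos)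
    rw [hrepr]
    apply Submodule.sum_mem
    intro i _
    have ha : ∃ a : ℤ_[3], algebraMap ℤ_[3] ℚ_[3] a = (3:ℚ_[3])^t * e w i := by
      refine ⟨⟨(3:ℚ_[3])^t * e w i, hcoef i⟩, ?_⟩
      rfl
    obtain ⟨a, hava⟩ := ha
    have hsmul : a • g i = ((3:ℚ_[3])^t * e w i) • g i := by
      rw [← IsScalarTower.algebraMap_smul ℚ_[3] a (g i), hava]
    have : e w i • b i = a • g i := by
      rw [hsmul, hg]
      simp only [smul_smul]
      congr 1
      field_simp
    rw [this]
    exact Submodule.smul_mem _ _ (Submodule.subset_span (Set.mem_range_self i))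
  -- powers of z are in N
  have hpow : ∀ k : ℕ, z ^ k ∈ N := fun k => hmem _ (hD k)
  -- the adjoin submodule is contained in N
  have hTN : Subalgebra.toSubmodule (Algebra.adjoin ℤ_[3] {z}) ≤ N := by
    intro w hw
    rw [Subalgebra.mem_toSubmodule, Algebra.adjoin_singleton_eq_range_aeval] at hw
    obtain ⟨p, rfl⟩ := hw
    show (Polynomial.aeval z) p ∈ N
    rw [Polynomial.aeval_eq_sum_range]
    apply Submodule.sum_mem
    intro i _
    exact Submodule.smul_mem _ _ (hpow i)
  -- FG via Noetherian
  haveI : IsNoetherian ℤ_[3] N := isNoetherian_of_fg_of_noetherian N hNfg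
  have hfg : (Subalgebra.toSubmodule (Algebra.adjoin ℤ_[3] {z})).FG := by
    have h1 : (Submodule.comap N.subtype (Subalgebra.toSubmodule (Algebra.adjoin ℤ_[3] {z}))).FG :=
      IsNoetherian.noetherian _
    have h2 := Submodule.FG.map N.subtype h1
    rwa [Submodule.map_comap_subtype, inf_eq_right.mpr hTN] at h2
  exact IsIntegral.of_mem_of_fg _ hfg z (Algebra.self_mem_adjoin_singleton ℤ_[3] z)

/-- the dichotomy: x or x⁻¹ is integral -/
theorem int_or_inv_int (x : M) (hx : x ≠ 0) :
    IsIntegral ℤ_[3] x ∨ IsIntegral ℤ_[3] x⁻¹ := by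
  obtain ⟨C, hC1, hCmul⟩ := nuAux_mul_bound (M := M)
  obtain ⟨B, hB, hBinv⟩ := nuAux_inv_le (M := M)
  by_cases hpb : ∃ D : ℝ, ∀ k : ℕ, nuAux M (x ^ k) ≤ D
  · obtain ⟨D, hD⟩ := hpb
    exact Or.inl (integral_of_powerBounded x D hD)
  · push_neg at hpb
    obtain ⟨k0, hk0⟩ := hpb (max (nuAux M 1) (B * C))
    have hk0ne : k0 ≠ 0 := by
      intro h
      rw [h, pow_zero] at hk0
      exact absurd hk0 (not_lt.mpr (le_max_left _ _))
    have hxk0 : x ^ k0 ≠ 0 := pow_ne_zero _ hx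
    have hνxk0 : B * C < nuAux M (x ^ k0) := lt_of_le_of_lt (le_max_right _ _) hk0
    have hνpos : 0 < nuAux M (x ^ k0) := by
      have : (0:ℝ) < B * C := by positivity
      linarith
    have hδ : nuAux M ((x ^ k0)⁻¹) ≤ B / nuAux M (x ^ k0) := hBinv _ hxk0
    have hCδ : C * nuAux M ((x ^ k0)⁻¹) ≤ 1 := by
      have h1 : nuAux M ((x ^ k0)⁻¹) ≤ B / nuAux M (x ^ k0) := hδ
      have h2 : B / nuAux M (x ^ k0) < B / (B * C) := by
        apply div_lt_div_of_pos_left hB (by positivity) hνxk0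
      have h3 : B / (B * C) = C⁻¹ := by
        field_simp
      have hCpos : (0:ℝ) < C := by linarith
      calc C * nuAux M ((x ^ k0)⁻¹) ≤ C * (B / nuAux M (x ^ k0)) :=
            mul_le_mul_of_nonneg_left h1 (le_of_lt hCpos)
        _ ≤ C * C⁻¹ := by
            apply mul_le_mul_of_nonneg_left _ (le_of_lt hCpos)
            rw [← h3]; exact le_of_lt h2
        _ = 1 := mul_inv_cancel₀ (ne_of_gt hCpos)
    -- E := max of nuAux (x⁻¹ ^ r) over r < k0
    have hk0pos : 0 < k0 := Nat.pos_of_ne_zero hk0ne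
    set E : ℝ := ((Finset.range k0).sup' (by simp [Finset.nonempty_range_iff]; omega) (fun r => nuAux M (x⁻¹ ^ r))) with hE
    have hEr : ∀ r < k0, nuAux M (x⁻¹ ^ r) ≤ E := by
      intro r hr
      exact Finset.le_sup' (f := fun r => nuAux M (x⁻¹ ^ r)) (Finset.mem_range.mpr hr)
    have hbound : ∀ k : ℕ, nuAux M (x⁻¹ ^ k) ≤ E := by
      intro k
      induction k using Nat.strong_induction_on with
      | _ k ih =>
        by_cases hk : k < k0
        · exact hEr k hk
        · push_neg at hk
          have hksub : k - k0 < k := Nat.sub_lt (lt_of_lt_of_le hk0pos hk) hk0pos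
          have hsplit : x⁻¹ ^ k = x⁻¹ ^ k0 * x⁻¹ ^ (k - k0) := by
            rw [← pow_add]
            congr 1
            omega
          rw [hsplit]
          have hinv : x⁻¹ ^ k0 = (x ^ k0)⁻¹ := by rw [inv_pow]
          calc nuAux M (x⁻¹ ^ k0 * x⁻¹ ^ (k - k0))
              ≤ C * nuAux M (x⁻¹ ^ k0) * nuAux M (x⁻¹ ^ (k - k0)) := hCmul _ _
            _ ≤ 1 * nuAux M (x⁻¹ ^ (k - k0)) := by
                apply mul_le_mul_of_nonneg_right _ (nuAux_nonneg _)
                rw [hinv]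
                exact hCδ
            _ = nuAux M (x⁻¹ ^ (k - k0)) := one_mul _
            _ ≤ E := ih _ hksub
    exact Or.inr (integral_of_powerBounded x⁻¹ E hbound)

end Nu3

set_option maxHeartbeats 2000000 in
/-- Let `M` be a degree-6 cyclic Galois extension of `ℚ₃` containing a primitive cube root
of unity `ω`, with ring of integers `𝒪_M = integralClosure ℤ₃ M`. If `χ : 𝒪_Mˣ → Mˣ` is a
group homomorphism with `χ(u)⁶ = 1` for all `u` and `χ(τ(u)) = τ(χ(u))` for every
`τ ∈ Gal(M/ℚ₃)`, then `χ(ω) = 1`. -/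
theorem stmt_18 (M : Type*) [Field M] [Algebra ℚ_[3] M]
    (hdeg : Module.finrank ℚ_[3] M = 6) [IsGalois ℚ_[3] M]
    (hcyc : IsCyclic (M ≃ₐ[ℚ_[3]] M))
    [Algebra ℤ_[3] M] [IsScalarTower ℤ_[3] ℚ_[3] M]
    (ω : M) (hω : ω ^ 2 + ω + 1 = 0)
    (χ : (integralClosure ℤ_[3] M)ˣ →* Mˣ)
    (hχ6 : ∀ u : (integralClosure ℤ_[3] M)ˣ, (χ u) ^ 6 = 1)
    (hχτ : ∀ (τ : M ≃ₐ[ℚ_[3]] M) (u v : (integralClosure ℤ_[3] M)ˣ),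
      ((v : integralClosure ℤ_[3] M) : M) = τ ((u : integralClosure ℤ_[3] M) : M) →
      ((χ v : Mˣ) : M) = τ ((χ u : Mˣ) : M)) :
    ∀ u : (integralClosure ℤ_[3] M)ˣ,
      ((u : integralClosure ℤ_[3] M) : M) = ω → χ u = 1 := by
  haveI hFD : FiniteDimensional ℚ_[3] M := FiniteDimensional.of_finrank_pos (by omega)
  intro W hW
  -- basic facts about ω
  have hω3 : ω ^ 3 = 1 := by linear_combination (ω - 1) * hω
  have hω0 : ω ≠ 0 := by
    intro h; rw [h] at hω; norm_num at hω
  -- ω is not in the image of ℚ₃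
  have hωnot : ¬ ∃ r : ℚ_[3], algebraMap ℚ_[3] M r = ω := by
    rintro ⟨r, hr⟩
    have hinj := (algebraMap ℚ_[3] M).injective
    have hr2 : r ^ 2 + r + 1 = 0 := by
      apply hinj
      rw [map_add, map_add, map_pow, map_one, map_zero, hr]
      exact hω
    set s : ℚ_[3] := 2 * r + 1 with hs
    have hs2 : s * s = -3 := by rw [hs]; linear_combination 4 * hr2
    have hsne : s ≠ 0 := by
      intro h; rw [h] at hs2; norm_num at hs2
    have hns : ‖s‖ * ‖s‖ = ‖(3:ℚ_[3])‖ := by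
      rw [← norm_mul, hs2, norm_neg]
    have h3 : ‖(3:ℚ_[3])‖ = (3:ℝ)^(-1 : ℤ) := by
      have := @Padic.norm_p 3 ⟨by norm_num⟩
      push_cast at this
      rw [this]; norm_num
    have hval := Padic.norm_eq_zpow_neg_valuation hsne
    rw [hval, h3] at hns
    push_cast at hns
    rw [← zpow_add₀ (by norm_num : (3:ℝ) ≠ 0)] at hns
    have := (zpow_right_inj₀ (by norm_num : (0:ℝ) < 3) (by norm_num : (3:ℝ) ≠ 1)).mp hns
    omega
  -- generator of the Galois group
  obtain ⟨σ, hσgen⟩ := hcyc.exists_generator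
  have hcard : Fintype.card (M ≃ₐ[ℚ_[3]] M) = 6 := by
    rw [← Nat.card_eq_fintype_card, IsGalois.card_aut_eq_finrank, hdeg]
  have horder : orderOf σ = 6 := by
    rw [orderOf_eq_card_of_forall_mem_zpowers hσgen, Nat.card_eq_fintype_card, hcard]
  have hσ6 : σ ^ 6 = 1 := by
    rw [← horder]; exact pow_orderOf_eq_one σ
  have hσ6x : ∀ x : M, σ (σ (σ (σ (σ (σ x))))) = x := by
    intro x
    have h1 : (σ ^ 6) x = σ (σ (σ (σ (σ (σ x))))) := by
      simp only [pow_succ, pow_zero, one_mul, AlgEquiv.mul_apply]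
    rw [← h1, hσ6]
    rfl
  have hσ2ne : σ ^ 2 ≠ 1 := by
    intro h
    have := orderOf_dvd_of_pow_eq_one h
    rw [horder] at this; omega
  have hσ4ne : σ ^ 4 ≠ 1 := by
    intro h
    have := orderOf_dvd_of_pow_eq_one h
    rw [horder] at this; omega
  -- σ does not fix ω
  have hσω : σ ω ≠ ω := by
    intro hfix
    have hpowfix : ∀ n : ℕ, (σ ^ n) ω = ω := by
      intro n
      induction n with
      | zero => simp
      | succ m ih =>
        rw [pow_succ, AlgEquiv.mul_apply, hfix]
        exact ih
    have hfixall : ∀ τ : (M ≃ₐ[ℚ_[3]] M), τ ω = ω := by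
      intro τ
      obtain ⟨n, hn⟩ := (mem_powers_iff_mem_zpowers).mpr (hσgen τ)
      rw [← hn]
      exact hpowfix n
    -- hence ω is fixed by the full group, so lies in ℚ₃
    have hbot : ω ∈ (⊥ : IntermediateField ℚ_[3] M) := by
      rw [← IsGalois.fixedField_fixingSubgroup (⊥ : IntermediateField ℚ_[3] M)]
      intro g
      exact hfixall g.1
    rw [IntermediateField.mem_bot] at hbot
    obtain ⟨r, hr⟩ := hbot
    exact hωnot ⟨r, hr⟩
  -- σ ω = ω²
  have hσω2 : σ ω = ω ^ 2 := by
    have happ : (σ ω) ^ 2 + σ ω + 1 = 0 := by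
      have := congrArg σ hω
      rw [map_add, map_add, map_pow, map_one, map_zero] at this
      exact this
    have hfac : (σ ω - ω) * (σ ω + ω + 1) = 0 := by
      linear_combination happ - hω
    rcases mul_eq_zero.mp hfac with h | h
    · exact absurd (sub_eq_zero.mp h) hσω
    · have : σ ω = -ω - 1 := by linear_combination h
      rw [this]; linear_combination -hω
  -- ρ := σ ∘ σ fixes ω
  have hρω : σ (σ ω) = ω := by
    rw [hσω2, map_pow, hσω2]
    linear_combination ω * hω3
  -- ρ := σ²
  set ρ : M ≃ₐ[ℚ_[3]] M := σ * σ with hρdef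
  have hρomega : ρ ω = ω := by rw [hρdef, AlgEquiv.mul_apply]; exact hρω
  have hρ1 : ρ ≠ 1 := by
    intro h; apply hσ2ne; rw [pow_two]; exact h
  have hρρ1 : ρ * ρ ≠ 1 := by
    intro h; apply hσ4ne
    have h4 : σ ^ 4 = (σ * σ) * (σ * σ) := by
      rw [show (4:ℕ) = 2 + 2 from rfl, pow_add, pow_two]
    rw [h4]; exact h
  have hρneρρ : ρ ≠ ρ * ρ := by
    intro h
    apply hρ1
    have h2 : ρ * ρ = ρ * 1 := by rw [mul_one]; exact h.symm
    exact (mul_left_cancel h2)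
  have hρ3 : ρ ^ 3 = 1 := by
    have h6 : (σ * σ) ^ 3 = σ ^ 6 := by
      rw [← pow_two, ← pow_mul]
    rw [hρdef, h6]; exact hσ6
  have hρ3x : ∀ x : M, ρ (ρ (ρ x)) = x := fun x => hσ6x x
  -- monoid hom injectivity
  have hmh_inj : Function.Injective (fun e : M ≃ₐ[ℚ_[3]] M => MonoidHomClass.toMonoidHom e) := by
    intro e e' h
    apply AlgEquiv.ext
    intro x
    exact DFunLike.congr_fun h x
  -- Dedekind independence: find c with y ≠ 0
  have hDede : ∃ cc : M, cc + ω * (ρ cc) + ω ^ 2 * (ρ (ρ cc)) ≠ 0 := by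
    by_contra hall
    push_neg at hall
    set g : Fin 3 → (M →* M) :=
      ![MonoidHomClass.toMonoidHom (1 : M ≃ₐ[ℚ_[3]] M),
        MonoidHomClass.toMonoidHom ρ, MonoidHomClass.toMonoidHom (ρ * ρ)] with hg
    have hginj : Function.Injective g := by
      intro i j hij
      fin_cases i <;> fin_cases j <;> simp only [hg] at hij ⊢ <;>
        first
          | rfl
          | (exfalso; first
              | exact hρ1 (hmh_inj hij).symm
              | exact hρ1 (hmh_inj hij)
              | exact hρρ1 (hmh_inj hij).symm
              | exact hρρ1 (hmh_inj hij)
              | exact hρneρρ (hmh_inj hij)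
              | exact hρneρρ (hmh_inj hij).symm)
    have hLI := (linearIndependent_monoidHom M M).comp g hginj
    rw [Fintype.linearIndependent_iff] at hLI
    have hzero : ∑ i, (![1, ω, ω ^ 2] : Fin 3 → M) i • ⇑(g i) = 0 := by
      funext x
      simp only [Fin.sum_univ_three, hg, Pi.add_apply, Pi.smul_apply, Pi.zero_apply,
        Matrix.cons_val_zero, Matrix.cons_val_one, Matrix.head_cons, Matrix.cons_val_two,
        Matrix.tail_cons, smul_eq_mul]
      have h1 : (MonoidHomClass.toMonoidHom (1 : M ≃ₐ[ℚ_[3]] M)) x = x := rfl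
      have h2 : (MonoidHomClass.toMonoidHom ρ) x = ρ x := rfl
      have h3 : (MonoidHomClass.toMonoidHom (ρ * ρ)) x = ρ (ρ x) := rfl
      rw [h1, h2, h3, one_mul]
      exact hall x
    have := hLI ![1, ω, ω ^ 2] hzero 0
    simp at this
  have hEx : ∃ y : M, y ≠ 0 ∧ ω * ρ y = y := by
    obtain ⟨cc, hcc⟩ := hDede
    refine ⟨cc + ω * (ρ cc) + ω ^ 2 * (ρ (ρ cc)), hcc, ?_⟩
    have hρy : ρ (cc + ω * (ρ cc) + ω ^ 2 * (ρ (ρ cc)))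
        = ρ cc + ω * (ρ (ρ cc)) + ω ^ 2 * cc := by
      rw [map_add, map_add, map_mul, map_mul, map_pow, hρomega, hρ3x cc]
    rw [hρy]
    linear_combination cc * hω3
  obtain ⟨y, hy0, hyρ⟩ := hEx
  have hyρ' : ω * σ (σ y) = y := by
    have := hyρ
    rw [hρdef, AlgEquiv.mul_apply] at this
    exact this
  -- u := σ(y)/y
  have hne0 : ∀ x : M, x ≠ 0 → σ x ≠ 0 := by
    intro x hx h
    exact hx (σ.injective (by rw [h, map_zero]))
  have hy1 : σ y ≠ 0 := hne0 _ hy0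
  have hy2 : σ (σ y) ≠ 0 := hne0 _ hy1
  have hy3 : σ (σ (σ y)) ≠ 0 := hne0 _ hy2
  have hy4 : σ (σ (σ (σ y))) ≠ 0 := hne0 _ hy3
  have hy5 : σ (σ (σ (σ (σ y)))) ≠ 0 := hne0 _ hy4
  set u : M := σ y * y⁻¹ with hudef
  have hu0 : u ≠ 0 := mul_ne_zero hy1 (inv_ne_zero hy0)
  have hA : σ (σ y) = ω ^ 2 * y := by
    linear_combination ω ^ 2 * hyρ' - (σ (σ y)) * hω3
  have hB : σ (σ (σ y)) = ω * σ y := by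
    have h := congrArg σ hA
    rw [map_mul, map_pow, hσω2] at h
    rw [h]
    linear_combination (σ y) * ω * hω3
  -- key relation for u
  have hurel : u = ω * σ (σ u) := by
    have hσσu : σ (σ u) = σ (σ (σ y)) * (σ (σ y))⁻¹ := by
      rw [hudef, map_mul, map_mul, map_inv₀, map_inv₀]
    rw [hσσu, hB, hA, hudef, mul_inv]
    have hcalc : ω * (ω * σ y * ((ω ^ 2)⁻¹ * y⁻¹)) = (ω ^ 2 * (ω ^ 2)⁻¹) * (σ y * y⁻¹) := by
      ring
    rw [hcalc, mul_inv_cancel₀ (pow_ne_zero 2 hω0), one_mul]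
  -- telescoping product
  have hσ6y : σ (σ (σ (σ (σ (σ y))))) = y := hσ6x y
  have e1 : σ u = σ (σ y) * (σ y)⁻¹ := by rw [hudef, map_mul, map_inv₀]
  have e2 : σ (σ u) = σ (σ (σ y)) * (σ (σ y))⁻¹ := by rw [e1, map_mul, map_inv₀]
  have e3 : σ (σ (σ u)) = σ (σ (σ (σ y))) * (σ (σ (σ y)))⁻¹ := by rw [e2, map_mul, map_inv₀]
  have e4 : σ (σ (σ (σ u))) = σ (σ (σ (σ (σ y)))) * (σ (σ (σ (σ y))))⁻¹ := by
    rw [e3, map_mul, map_inv₀]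
  have e5 : σ (σ (σ (σ (σ u)))) = y * (σ (σ (σ (σ (σ y)))))⁻¹ := by
    rw [e4, map_mul, map_inv₀, hσ6y]
  have htel : u * (σ u * (σ (σ u) * (σ (σ (σ u)) * (σ (σ (σ (σ u))) *
      σ (σ (σ (σ (σ u)))))))) = 1 := by
    have key : ∀ a b c d e f : M, a ≠ 0 → b ≠ 0 → c ≠ 0 → d ≠ 0 → e ≠ 0 → f ≠ 0 →
        (b * a⁻¹) * ((c * b⁻¹) * ((d * c⁻¹) * ((e * d⁻¹) * ((f * e⁻¹) * (a * f⁻¹))))) = 1 := by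
      intro a b c d e f ha hb hc hd he hf
      calc (b * a⁻¹) * ((c * b⁻¹) * ((d * c⁻¹) * ((e * d⁻¹) * ((f * e⁻¹) * (a * f⁻¹)))))
          = (a * a⁻¹) * ((b * b⁻¹) * ((c * c⁻¹) * ((d * d⁻¹) * ((e * e⁻¹) * (f * f⁻¹))))) := by
            ring
        _ = 1 := by
            rw [mul_inv_cancel₀ ha, mul_inv_cancel₀ hb, mul_inv_cancel₀ hc,
              mul_inv_cancel₀ hd, mul_inv_cancel₀ he, mul_inv_cancel₀ hf]
            norm_num
    rw [e5, e4, e3, e2, e1, hudef]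
    exact key y (σ y) (σ (σ y)) (σ (σ (σ y))) (σ (σ (σ (σ y)))) (σ (σ (σ (σ (σ y)))))
      hy0 hy1 hy2 hy3 hy4 hy5
  -- integrality transfer
  have hmapint : ∀ (τ : M ≃ₐ[ℚ_[3]] M) (x : M), IsIntegral ℤ_[3] x → IsIntegral ℤ_[3] (τ x) := by
    intro τ x hx
    have := hx.map ((τ.restrictScalars ℤ_[3]).toAlgHom)
    simpa using this
  -- both u and u⁻¹ are integral
  have hint : IsIntegral ℤ_[3] u ∧ IsIntegral ℤ_[3] u⁻¹ := by
    have htel' : u⁻¹ * (σ u⁻¹ * (σ (σ u⁻¹) * (σ (σ (σ u⁻¹)) * (σ (σ (σ (σ u⁻¹))) *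
        σ (σ (σ (σ (σ u⁻¹)))))))) = 1 := by
      simp only [map_inv₀]
      rw [← mul_inv, ← mul_inv, ← mul_inv, ← mul_inv, ← mul_inv]
      rw [htel, inv_one]
    rcases int_or_inv_int u hu0 with hui | hui
    · refine ⟨hui, ?_⟩
      have hrest : IsIntegral ℤ_[3] (σ u * (σ (σ u) * (σ (σ (σ u)) * (σ (σ (σ (σ u))) *
          σ (σ (σ (σ (σ u)))))))) := by
        have i1 := hmapint σ _ hui
        have i2 := hmapint σ _ i1
        have i3 := hmapint σ _ i2
        have i4 := hmapint σ _ i3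
        have i5 := hmapint σ _ i4
        exact i1.mul (i2.mul (i3.mul (i4.mul i5)))
      have : u⁻¹ = σ u * (σ (σ u) * (σ (σ (σ u)) * (σ (σ (σ (σ u))) *
          σ (σ (σ (σ (σ u))))))) := (inv_eq_of_mul_eq_one_right htel)
      rw [this]; exact hrest
    · refine ⟨?_, hui⟩
      have hrest : IsIntegral ℤ_[3] (σ u⁻¹ * (σ (σ u⁻¹) * (σ (σ (σ u⁻¹)) * (σ (σ (σ (σ u⁻¹))) *
          σ (σ (σ (σ (σ u⁻¹)))))))) := by
        have i1 := hmapint σ _ hui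
        have i2 := hmapint σ _ i1
        have i3 := hmapint σ _ i2
        have i4 := hmapint σ _ i3
        have i5 := hmapint σ _ i4
        exact i1.mul (i2.mul (i3.mul (i4.mul i5)))
      have h' : u = σ u⁻¹ * (σ (σ u⁻¹) * (σ (σ (σ u⁻¹)) * (σ (σ (σ (σ u⁻¹))) *
          σ (σ (σ (σ (σ u⁻¹))))))) := by
        have := inv_eq_of_mul_eq_one_right htel'
        rwa [inv_inv] at this
      rw [h']; exact hrest
  -- build units of the integral closure
  have huO : u ∈ integralClosure ℤ_[3] M := hint.1
  have huinvO : u⁻¹ ∈ integralClosure ℤ_[3] M := hint.2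
  set Ou : integralClosure ℤ_[3] M := ⟨u, huO⟩ with hOu
  set Ouinv : integralClosure ℤ_[3] M := ⟨u⁻¹, huinvO⟩ with hOuinv
  have hOmul : Ou * Ouinv = 1 := Subtype.ext (mul_inv_cancel₀ hu0)
  set Uu : (integralClosure ℤ_[3] M)ˣ := Units.mkOfMulEqOne Ou Ouinv hOmul with hUu
  have hσσuO : σ (σ u) ∈ integralClosure ℤ_[3] M := hmapint σ _ (hmapint σ _ hint.1)
  have hσσuinvO : σ (σ u⁻¹) ∈ integralClosure ℤ_[3] M := hmapint σ _ (hmapint σ _ hint.2)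
  have hOρmul : (⟨σ (σ u), hσσuO⟩ : integralClosure ℤ_[3] M) * ⟨σ (σ u⁻¹), hσσuinvO⟩ = 1 := by
    apply Subtype.ext
    show σ (σ u) * σ (σ u⁻¹) = 1
    rw [← map_mul, ← map_mul, mul_inv_cancel₀ hu0, map_one, map_one]
  set Uρ : (integralClosure ℤ_[3] M)ˣ := Units.mkOfMulEqOne _ _ hOρmul with hUρ
  -- Uu = W * Uρ
  have hUW : Uu = W * Uρ := by
    apply Units.ext
    rw [Units.val_mul]
    apply Subtype.ext
    show u = ((W : integralClosure ℤ_[3] M) : M) * σ (σ u)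
    rw [hW]
    exact hurel
  -- apply χ
  have hmul : χ Uu = χ W * χ Uρ := by rw [hUW, map_mul]
  have hequiv : ((χ Uρ : Mˣ) : M) = (σ * σ) ((χ Uu : Mˣ) : M) := by
    apply hχτ (σ * σ) Uu Uρ
    show σ (σ u) = (σ * σ) u
    rw [AlgEquiv.mul_apply]
  set a : M := ((χ Uu : Mˣ) : M) with ha
  set bb : M := ((χ W : Mˣ) : M) with hbb
  have haeq : a = bb * σ (σ a) := by
    have h1 : ((χ Uu : Mˣ) : M) = ((χ W : Mˣ) : M) * ((χ Uρ : Mˣ) : M) := by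
      rw [hmul, Units.val_mul]
    rw [hequiv, AlgEquiv.mul_apply] at h1
    exact h1
  have ha6 : a ^ 6 = 1 := by
    have := congrArg (Units.val) (hχ6 Uu)
    rwa [Units.val_pow_eq_pow_val, Units.val_one] at this
  have ha0 : a ≠ 0 := Units.ne_zero (χ Uu)
  -- σ² fixes all sixth roots of unity
  have hfixa : σ (σ a) = a := by
    have h1 : (a ^ 2 - 1) * (a ^ 2 - ω) * (a ^ 2 - ω ^ 2) = 0 := by
      linear_combination ha6 + (a ^ 2 - a ^ 4) * hω + (a ^ 2 - 1) * hω3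
    rcases mul_eq_zero.mp h1 with h2 | h2
    · rcases mul_eq_zero.mp h2 with h3 | h3
      · have h4 : (a - 1) * (a + 1) = 0 := by linear_combination h3
        rcases mul_eq_zero.mp h4 with h5 | h5
        · have : a = 1 := by linear_combination h5
          rw [this, map_one, map_one]
        · have : a = -1 := by linear_combination h5
          rw [this, map_neg, map_neg, map_one, map_one]
      · have h4 : (a - ω ^ 2) * (a + ω ^ 2) = 0 := by linear_combination h3 - ω * hω3
        rcases mul_eq_zero.mp h4 with h5 | h5
        · have : a = ω ^ 2 := by linear_combination h5
          rw [this, map_pow, map_pow, hρω]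
        · have : a = -ω ^ 2 := by linear_combination h5
          rw [this, map_neg, map_neg, map_pow, map_pow, hρω]
    · have h4 : (a - ω) * (a + ω) = 0 := by linear_combination h2
      rcases mul_eq_zero.mp h4 with h5 | h5
      · have : a = ω := by linear_combination h5
        rw [this, hρω]
      · have : a = -ω := by linear_combination h5
        rw [this, map_neg, map_neg, hρω]
  -- conclude bb = 1
  have hbb1 : bb = 1 := by
    rw [hfixa] at haeq
    have h0 : (bb - 1) * a = 0 := by linear_combination -haeq
    rcases mul_eq_zero.mp h0 with h | h
    · linear_combination h
    · exact absurd h ha0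
  apply Units.ext
  rw [Units.val_one]
  exact hbb1
end
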